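/- arXiv:1010.6052 — 4 statements merged into one kernel-verified Lean document; each statement's English description precedes it below -/
import Mathlib

section
/- Let p be a real polynomial all of whose roots are real, and let λ be any real number. Then the polynomial p - λ·p' has all real roots, and its mesh is at least the mesh of p: M(p - λp') ≥ M(p). -/
open Polynomial
open scoped ENNReal
open Finset

noncomputable section

/-- A real polynomial is hyperbolic (all its roots are real) iff the number of its
real roots counted with multiplicity equals its degree. -/
def Hyperbolic (p : Polynomial ℝ) : Prop := p.roots.card = p.natDegree

/-- The list of real roots of `p` (with multiplicity), sorted in increasing order. -/
def sortedRoots (p : Polynomial ℝ) : List ℝ := p.roots.sort (· ≤ ·)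

/-- The mesh of `p`: the minimal distance between consecutive real roots of `p`
(counted with multiplicity); it is `⊤` if `p` has fewer than two real roots. -/
def mesh (p : Polynomial ℝ) : ℝ≥0∞ :=
  ⨅ i ∈ Finset.range ((sortedRoots p).length - 1),
    ENNReal.ofReal ((sortedRoots p).getD (i + 1) 0 - (sortedRoots p).getD i 0)

/-- The list of absolute values of the real roots of `p` (with multiplicity),
sorted in increasing order. -/
def sortedAbsRoots (p : Polynomial ℝ) : List ℝ := (p.roots.map (fun x => |x|)).sort (· ≤ ·)

/-- The logarithmic mesh of `p`: the minimal quotient of consecutive absolute values of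
roots of `p`, the roots being ordered so that `|x₁| ≤ |x₂| ≤ ⋯ ≤ |x_k|`;
it is `⊤` if `p` has fewer than two real roots. -/
def lmesh (p : Polynomial ℝ) : ℝ≥0∞ :=
  ⨅ i ∈ Finset.range ((sortedAbsRoots p).length - 1),
    ENNReal.ofReal ((sortedAbsRoots p).getD (i + 1) 0 / (sortedAbsRoots p).getD i 0)

/-- The diagonal operator associated with the sequence `α`, acting on `ℝ[x]`
by `x^i ↦ α i • x^i`. -/
def diagOp (α : ℕ → ℝ) (p : Polynomial ℝ) : Polynomial ℝ :=
  ∑ i ∈ p.support, Polynomial.C (α i * p.coeff i) * Polynomial.X ^ i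

/-- The polynomial `∑_{j=0}^k C(k,j) * a j * x^j` (binomial normalization). -/
def binPoly (k : ℕ) (a : ℕ → ℝ) : Polynomial ℝ :=
  ∑ j ∈ Finset.range (k + 1), Polynomial.C ((k.choose j : ℝ) * a j) * Polynomial.X ^ j

/-- The Schur–Szegő product of two polynomials of degree `k`: if
`P = ∑ C(k,j) aⱼ xʲ` and `Q = ∑ C(k,j) bⱼ xʲ`, then `P * Q = ∑ C(k,j) aⱼ bⱼ xʲ`,
i.e. the `j`-th coefficient of `P*Q` is `C(k,j)⁻¹ * (coeff j of P) * (coeff j of Q)`. -/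
def schurSzego (k : ℕ) (P Q : Polynomial ℝ) : Polynomial ℝ :=
  ∑ j ∈ Finset.range (k + 1),
    Polynomial.C ((k.choose j : ℝ)⁻¹ * P.coeff j * Q.coeff j) * Polynomial.X ^ j

/-- One-sided (non-strict) interlacing: writing the sorted roots of `f` as
`x₁ ≤ ⋯ ≤ x_n` and those of `g` as `y₁ ≤ ⋯ ≤ y_m`, we have
`x₁ ≤ y₁ ≤ x₂ ≤ y₂ ≤ ⋯`. -/
def InterlaceAux (f g : Polynomial ℝ) : Prop :=
  (∀ i < (sortedRoots f).length, (sortedRoots f).getD i 0 ≤ (sortedRoots g).getD i 0) ∧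
  (∀ i, i + 1 < (sortedRoots f).length →
    (sortedRoots g).getD i 0 ≤ (sortedRoots f).getD (i + 1) 0)

/-- The roots of `f` and `g` (non-strictly) interlace. -/
def RootsInterlace (f g : Polynomial ℝ) : Prop := InterlaceAux f g ∨ InterlaceAux g f

lemma list_prod_getD {M : Type*} [CommMonoid M] (f : ℝ → M) :
    ∀ l : List ℝ, (l.map f).prod = ∏ i ∈ Finset.range l.length, f (l.getD i 0) := by
  intro l
  induction l with
  | nil => simp
  | cons a t ih =>
      simp only [List.map_cons, List.prod_cons, List.length_cons, ih]
      rw [Finset.prod_range_succ']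
      simp [mul_comm]

lemma derivative_finset_prod {R : Type*} [CommSemiring R] {ι : Type*} [DecidableEq ι]
    (s : Finset ι) (f : ι → R[X]) :
    derivative (∏ b ∈ s, f b) =
      ∑ b ∈ s, (∏ a ∈ s.erase b, f a) * derivative (f b) := by
  classical
  induction s using Finset.induction_on with
  | empty => simp
  | @insert x s hx ih =>
      rw [Finset.prod_insert hx, derivative_mul, ih, Finset.mul_sum, Finset.sum_insert hx,
        Finset.erase_insert hx, mul_comm (derivative (f x))]
      congr 1
      apply Finset.sum_congr rfl
      intro b hb
      rw [Finset.erase_insert_of_ne (by rintro rfl; exact hx hb),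
        Finset.prod_insert (fun h => hx (Finset.mem_of_mem_erase h))]
      ring

lemma eval_factored {K : Type*} [Field K] (n : ℕ) (c : K) (r : ℕ → K) (t : K) :
    eval t (C c * ∏ i ∈ range n, (X - C (r i))) = c * ∏ i ∈ range n, (t - r i) := by
  simp [eval_prod]

lemma eval_derivative_factored {K : Type*} [Field K] (n : ℕ) (c : K) (r : ℕ → K) (t : K) :
    eval t (derivative (C c * ∏ i ∈ range n, (X - C (r i))))
      = c * ∑ i ∈ range n, ∏ j ∈ (range n).erase i, (t - r j) := by
  rw [derivative_C_mul, derivative_finset_prod]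
  simp [eval_finset_sum, eval_prod, Finset.mul_sum]

lemma sum_inv_eq {K : Type*} [Field K] {n : ℕ} {c lam : K} (r : ℕ → K)
    (hc : c ≠ 0) {t : K} (ht : ∀ i ∈ range n, t ≠ r i)
    (hroot : eval t ((C c * ∏ i ∈ range n, (X - C (r i)))
      - C lam * derivative (C c * ∏ i ∈ range n, (X - C (r i)))) = 0) :
    ∑ i ∈ range n, (t - r i)⁻¹ = lam⁻¹ := by
  have hne : ∀ i ∈ range n, t - r i ≠ 0 := fun i hi => sub_ne_zero.2 (ht i hi)
  have hQ : ∏ i ∈ range n, (t - r i) ≠ 0 := Finset.prod_ne_zero_iff.2 hne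
  rw [eval_sub, eval_factored, eval_mul, eval_C, eval_derivative_factored] at hroot
  have hS : ∑ i ∈ range n, ∏ j ∈ (range n).erase i, (t - r j)
      = (∏ i ∈ range n, (t - r i)) * ∑ i ∈ range n, (t - r i)⁻¹ := by
    rw [Finset.mul_sum]
    apply Finset.sum_congr rfl
    intro i hi
    rw [← Finset.prod_erase_mul (range n) _ hi, mul_assoc,
      mul_inv_cancel₀ (hne i hi), mul_one]
  rw [hS] at hroot
  have h1 : c * (∏ i ∈ range n, (t - r i)) * (1 - lam * ∑ i ∈ range n, (t - r i)⁻¹) = 0 := by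
    ring_nf
    ring_nf at hroot
    linear_combination hroot
  rcases mul_eq_zero.1 h1 with h | h
  · exact absurd h (mul_ne_zero hc hQ)
  · have h' : lam * ∑ i ∈ range n, (t - r i)⁻¹ = 1 := (sub_eq_zero.1 h).symm
    rw [mul_comm] at h'
    exact eq_inv_of_mul_eq_one_left h'


-- ===== factorization from hyperbolicity =====

lemma sortedRoots_coe (p : ℝ[X]) : (↑(sortedRoots p) : Multiset ℝ) = p.roots :=
  Multiset.sort_eq _ _

lemma sortedRoots_length (p : ℝ[X]) (hp : Hyperbolic p) :
    (sortedRoots p).length = p.natDegree := by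
  rw [sortedRoots, Multiset.length_sort]; exact hp

lemma hyp_factorization (p : ℝ[X]) (hp : Hyperbolic p) :
    p = C p.leadingCoeff *
      ∏ i ∈ Finset.range p.natDegree, (X - C ((sortedRoots p).getD i 0)) := by
  have hsplit : Splits p := (splits_iff_card_roots).2 hp
  have h1 := hsplit.eq_prod_roots
  rw [← sortedRoots_coe, Multiset.map_coe, Multiset.prod_coe] at h1
  conv_lhs => rw [h1]
  rw [list_prod_getD, sortedRoots_length p hp]

-- ===== part 1 : hyperbolicity of p - lam p' =====

lemma hyperbolic_target (p : ℝ[X]) (hp : Hyperbolic p) (lam : ℝ)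
    (hn : 1 ≤ p.natDegree) :
    Hyperbolic (p - C lam * derivative p) ∧ (p - C lam * derivative p).natDegree = p.natDegree := by
  set n := p.natDegree with hn_def
  set c := p.leadingCoeff with hc_def
  set ρ : ℕ → ℝ := fun i => (sortedRoots p).getD i 0 with hρ_def
  have hfac : p = C c * ∏ i ∈ range n, (X - C (ρ i)) := hyp_factorization p hp
  have hp0 : p ≠ 0 := by
    intro h
    rw [h] at hn_def
    simp at hn_def
    omega
  have hc0 : c ≠ 0 := leadingCoeff_ne_zero.2 hp0
  set q := p - C lam * derivative p with hq_def
  have hq_deg : q.natDegree = n :=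
    natDegree_sub_eq_left_of_natDegree_lt
      (lt_of_le_of_lt (natDegree_C_mul_le _ _) (natDegree_derivative_lt (by omega)))
  refine ⟨?_, hq_deg⟩
  have hq0 : q ≠ 0 := by
    intro h
    rw [h, natDegree_zero] at hq_deg
    omega
  set ρℂ : ℕ → ℂ := fun i => ((ρ i : ℝ) : ℂ) with hρℂ_def
  set qℂ := q.map (algebraMap ℝ ℂ) with hqℂ_def
  have hpm : p.map (algebraMap ℝ ℂ) = C (c : ℂ) * ∏ i ∈ range n, (X - C (ρℂ i)) := by
    conv_lhs => rw [hfac]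
    rw [Polynomial.map_mul, Polynomial.map_C, Polynomial.map_prod]
    simp [Polynomial.map_sub, hρℂ_def]
  have hfacℂ : qℂ = (C (c : ℂ) * ∏ i ∈ range n, (X - C (ρℂ i)))
      - C (lam : ℂ) * derivative (C (c : ℂ) * ∏ i ∈ range n, (X - C (ρℂ i))) := by
    rw [hqℂ_def, hq_def, Polynomial.map_sub, Polynomial.map_mul, Polynomial.map_C,
      ← derivative_map, hpm]
    simp
  have hqℂ0 : qℂ ≠ 0 := by
    rw [hqℂ_def]
    exact (Polynomial.map_ne_zero_iff (algebraMap ℝ ℂ).injective).2 hq0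
  have hreal : ∀ z ∈ qℂ.roots, z.im = 0 := by
    intro z hz
    by_contra him
    have hzr : eval z qℂ = 0 := (mem_roots hqℂ0).1 hz
    have hzne : ∀ i ∈ range n, z ≠ ρℂ i := by
      intro i _ h
      apply him
      rw [h, hρℂ_def]
      exact Complex.ofReal_im _
    have hcc : (c : ℂ) ≠ 0 := by exact_mod_cast hc0
    have hsum := sum_inv_eq (c := (c : ℂ)) (lam := (lam : ℂ)) ρℂ hcc hzne
      (by rw [← hfacℂ]; exact hzr)
    have him2 := congrArg Complex.im hsum
    rw [Complex.im_sum] at him2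
    have hterm : ∀ i ∈ range n, ((z - ρℂ i)⁻¹).im
        = -z.im * (Complex.normSq (z - ρℂ i))⁻¹ := by
      intro i _
      rw [Complex.inv_im]
      rw [Complex.sub_im, hρℂ_def]
      simp [Complex.ofReal_im, div_eq_mul_inv]
    rw [Finset.sum_congr rfl hterm] at him2
    have hrhs : ((lam : ℂ)⁻¹).im = 0 := by
      rw [← Complex.ofReal_inv]
      exact Complex.ofReal_im _
    rw [hrhs, ← Finset.mul_sum] at him2
    have hNpos : ∀ i ∈ range n, 0 < (Complex.normSq (z - ρℂ i))⁻¹ := by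
      intro i hi
      apply inv_pos.2
      apply Complex.normSq_pos.2
      exact sub_ne_zero.2 (hzne i hi)
    have hSpos : 0 < ∑ i ∈ range n, (Complex.normSq (z - ρℂ i))⁻¹ :=
      Finset.sum_pos hNpos ⟨0, Finset.mem_range.2 (by omega)⟩
    have : -z.im = 0 := by
      rcases mul_eq_zero.1 him2 with h | h
      · exact h
      · exact absurd h (ne_of_gt hSpos)
    exact him (by linarith [neg_eq_zero.1 this])
  -- descend the factorization to ℝ
  set R : Multiset ℝ := qℂ.roots.map Complex.re with hR_def
  have hmapeq : Multiset.map (fun a => X - C a) qℂ.roots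
      = Multiset.map (fun x : ℝ => X - C (x : ℂ)) R := by
    rw [hR_def, Multiset.map_map]
    apply Multiset.map_congr rfl
    intro z hz
    have : ((z.re : ℝ) : ℂ) = z := Complex.ext (Complex.ofReal_re _)
      (by rw [Complex.ofReal_im, hreal z hz])
    simp only [Function.comp_apply, this]
  have hsplitsℂ : Splits qℂ := IsAlgClosed.splits qℂ
  have hfac2 := hsplitsℂ.eq_prod_roots
  have hlc : qℂ.leadingCoeff = ((q.leadingCoeff : ℝ) : ℂ) := leadingCoeff_map _
  have hdescend : q = C q.leadingCoeff * (Multiset.map (fun x : ℝ => X - C x) R).prod := by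
    apply Polynomial.map_injective (algebraMap ℝ ℂ) (algebraMap ℝ ℂ).injective
    rw [Polynomial.map_mul, Polynomial.map_C, Polynomial.map_multiset_prod, Multiset.map_map,
      ← hqℂ_def, hfac2, hlc, hmapeq]
    congr 1
    apply congrArg Multiset.prod
    apply Multiset.map_congr rfl
    intro x _
    simp [Polynomial.map_sub]
  have hroots : q.roots = R := by
    rw [hdescend, roots_C_mul _ (leadingCoeff_ne_zero.2 hq0), roots_multiset_prod_X_sub_C]
  have hcard : Multiset.card R = n := by
    rw [hR_def, Multiset.card_map, splits_iff_card_roots.1 hsplitsℂ, hqℂ_def,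
      natDegree_map, hq_deg]
  rw [Hyperbolic, hroots, hcard, hq_deg]

lemma sq_identity (n : ℕ) (r : ℕ → ℝ) :
    (derivative (∏ i ∈ range n, (X - C (r i))))^2
      - (∏ i ∈ range n, (X - C (r i))) * derivative (derivative (∏ i ∈ range n, (X - C (r i))))
    = ∑ i ∈ range n, ∏ j ∈ (range n).erase i, (X - C (r j))^2 := by
  induction n with
  | zero => simp
  | succ n ih =>
      rw [Finset.prod_range_succ]
      set u := ∏ i ∈ range n, (X - C (r i)) with hu
      have hd : derivative (u * (X - C (r n))) = derivative u * (X - C (r n)) + u := by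
        rw [derivative_mul, derivative_X_sub_C, mul_one]
      rw [hd]
      have hd2 : derivative (derivative u * (X - C (r n)) + u)
          = derivative (derivative u) * (X - C (r n)) + derivative u + derivative u := by
        rw [derivative_add, derivative_mul, derivative_X_sub_C, mul_one]
      rw [hd2]
      have key : (derivative u * (X - C (r n)) + u)^2
          - u * (X - C (r n)) * (derivative (derivative u) * (X - C (r n)) + derivative u + derivative u)
          = u^2 + (X - C (r n))^2 * ((derivative u)^2 - u * derivative (derivative u)) := by ring
      rw [key, ih, Finset.sum_range_succ, Finset.range_add_one,
        Finset.erase_insert Finset.notMem_range_self, Finset.mul_sum]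
      rw [Finset.prod_pow]
      rw [add_comm]
      congr 1
      apply Finset.sum_congr rfl
      intro i hi
      rw [Finset.erase_insert_of_ne (by rintro rfl; exact Finset.notMem_range_self hi),
        Finset.prod_insert (fun h => Finset.notMem_range_self (Finset.mem_of_mem_erase h))]



lemma core_lemma {n : ℕ} (hn : 1 ≤ n) (r : ℕ → ℝ) {y y' : ℝ} (hyy : y < y')
    (hgap : ∀ i, i + 1 < n → r i + (y' - y) < r (i + 1))
    (hne : ∀ i ∈ range n, r i ≠ y ∧ r i ≠ y')
    (hzero : ∑ i ∈ range n, ((y - r i) * (y' - r i))⁻¹ = 0) : False := by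
  set s := y' - y with hs_def
  have hs : 0 < s := sub_pos.2 hyy
  -- chain of gaps
  have hchain : ∀ i k, 1 ≤ k → i + k < n → r i + (k : ℝ) * s < r (i + k) := by
    intro i k hk hik
    induction k with
    | zero => omega
    | succ k ih =>
        rcases Nat.eq_or_lt_of_le hk with h1 | h1
        · have : k = 0 := by omega
          subst this
          simpa using hgap i (by omega)
        · have hk' : 1 ≤ k := by omega
          have h2 := ih hk' (by omega)
          have h3 := hgap (i + k) (by omega)
          push_cast
          push_cast at h2
          calc r i + ((k : ℝ) + 1) * s = (r i + (k : ℝ) * s) + s := by ring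
          _ < r (i + k) + s := by linarith
          _ < r (i + k + 1) := h3
  set f : ℕ → ℝ := fun i => ((y - r i) * (y' - r i))⁻¹ with hf_def
  set I : Finset ℕ := (range n).filter (fun i => y < r i ∧ r i < y') with hI_def
  by_cases hI : I = ∅
  · -- all terms positive
    have hpos : ∀ i ∈ range n, 0 < f i := by
      intro i hi
      have hni : i ∉ I := by rw [hI]; exact Finset.notMem_empty i
      rw [hI_def, Finset.mem_filter] at hni
      push_neg at hni
      have h1 := (hne i hi).1
      have h2 := (hne i hi).2
      have hcase : r i < y ∨ y' < r i := by
        rcases lt_or_gt_of_ne h1 with h | h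
        · left; exact h
        · right; exact (hni hi h).lt_of_ne (Ne.symm h2)
      have hprod : 0 < (y - r i) * (y' - r i) := by
        rcases hcase with h | h
        · exact mul_pos (by linarith) (by linarith)
        · exact mul_pos_of_neg_of_neg (by linarith) (by linarith)
      exact inv_pos.2 hprod
    have : 0 < ∑ i ∈ range n, f i :=
      Finset.sum_pos hpos ⟨0, Finset.mem_range.2 (by omega)⟩
    rw [hzero] at this; exact lt_irrefl 0 this
  · -- exactly one root inside (y, y')
    obtain ⟨t, htI⟩ := Finset.nonempty_of_ne_empty hI
    have htmem : t ∈ range n ∧ y < r t ∧ r t < y' := Finset.mem_filter.1 htI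
    have htn : t < n := Finset.mem_range.1 htmem.1
    have huniq : ∀ u ∈ I, u = t := by
      intro u huI
      have humem : u ∈ range n ∧ y < r u ∧ r u < y' := Finset.mem_filter.1 huI
      by_contra hut
      have key : ∀ v w, v < w → w < n → y < r v → r w < y' → False := by
        intro v w hvw hwn hv hw
        have h1 : 1 ≤ w - v := by omega
        have h2 := hchain v (w - v) h1 (by omega)
        rw [show v + (w - v) = w by omega] at h2
        have : (1:ℝ) ≤ ((w - v : ℕ) : ℝ) := by exact_mod_cast h1
        nlinarith
      rcases lt_or_gt_of_ne hut with h | h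
      · exact key u t h htn humem.2.1 htmem.2.2
      · exact key t u h (Finset.mem_range.1 humem.1) htmem.2.1 humem.2.2
    set a : ℝ := r t - y with ha_def
    set b : ℝ := y' - r t with hb_def
    have ha : 0 < a := sub_pos.2 htmem.2.1
    have hb : 0 < b := sub_pos.2 htmem.2.2
    have hab : a + b = s := by rw [ha_def, hb_def, hs_def]; ring
    -- f t = -(a*b)⁻¹
    have hft : f t = -(a * b)⁻¹ := by
      rw [hf_def]
      simp only
      rw [show y - r t = -a by rw [ha_def]; ring, show y' - r t = b from rfl]
      rw [neg_mul, inv_neg]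
    -- split sum
    have hsplit : ∑ i ∈ range n, f i
        = (∑ i ∈ range t, f i) + f t + ∑ i ∈ Ico (t + 1) n, f i := by
      rw [Finset.range_eq_Ico,
        ← Finset.sum_Ico_consecutive f (Nat.zero_le (t+1)) (by omega : t + 1 ≤ n),
        ← Finset.range_eq_Ico, Finset.sum_range_succ]
    -- generic per-term bound
    have sub : ∀ (A B : ℝ), 0 < A → 0 < B → A + B = s → ∀ (k : ℕ) (d : ℝ), 1 ≤ k →
        (k : ℝ) * s < d →
        ((d - A) * (d + B))⁻¹ ≤ s⁻¹ * (((k : ℝ) * s - A)⁻¹ - (((k : ℝ) + 1) * s - A)⁻¹) := by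
      intro A B hA hB hAB k d hk hd
      have hk1 : (1 : ℝ) ≤ (k : ℝ) := by exact_mod_cast hk
      have h1 : 0 < (k : ℝ) * s - A := by nlinarith
      have h2 : 0 < (k : ℝ) * s + B := by nlinarith
      have heq : ((k : ℝ) + 1) * s - A = (k : ℝ) * s + B := by linarith
      rw [heq]
      have heq2 : s⁻¹ * (((k : ℝ) * s - A)⁻¹ - ((k : ℝ) * s + B)⁻¹)
          = (((k : ℝ) * s - A) * ((k : ℝ) * s + B))⁻¹ := by
        rw [inv_sub_inv h1.ne' h2.ne', show (k:ℝ) * s + B - ((k:ℝ) * s - A) = s by linarith,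
          div_eq_mul_inv, ← mul_assoc, inv_mul_cancel₀ hs.ne', one_mul]
      rw [heq2]
      apply inv_anti₀ (mul_pos h1 h2)
      apply mul_le_mul (by linarith) (by linarith) (le_of_lt h2) (by linarith)
    set ga : ℕ → ℝ := fun j => (((j : ℝ) + 1) * s - a)⁻¹ with hga_def
    set gb : ℕ → ℝ := fun j => (((j : ℝ) + 1) * s - b)⁻¹ with hgb_def
    have hga_pos : ∀ j : ℕ, 0 < ((j : ℝ) + 1) * s - a := by
      intro j
      have hj : (0 : ℝ) ≤ (j : ℝ) := Nat.cast_nonneg j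
      nlinarith
    have hgb_pos : ∀ j : ℕ, 0 < ((j : ℝ) + 1) * s - b := by
      intro j
      have hj : (0 : ℝ) ≤ (j : ℝ) := Nat.cast_nonneg j
      nlinarith
    -- left bound
    have hLbound : ∑ i ∈ range t, f i ≤ s⁻¹ * (ga 0 - ga t) := by
      have hstep : ∀ i ∈ range t, f i ≤ s⁻¹ * (ga (t - 1 - i) - ga (t - 1 - i + 1)) := by
        intro i hi
        have hit : i < t := Finset.mem_range.1 hi
        have hd := hchain i (t - i) (by omega) (by omega)
        rw [show i + (t - i) = t by omega] at hd
        have c1 : ((t - 1 - i : ℕ) : ℝ) + 1 = ((t - i : ℕ) : ℝ) := by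
          have h : (t - 1 - i) + 1 = t - i := by omega
          exact_mod_cast h
        have c2 : ((t - 1 - i + 1 : ℕ) : ℝ) + 1 = ((t - i : ℕ) : ℝ) + 1 := by
          have h : (t - 1 - i + 1) = t - i := by omega
          rw [h]
        have e1 : f i = (((r t - r i) - a) * ((r t - r i) + b))⁻¹ := by
          rw [hf_def]
          simp only
          congr 2
          · rw [ha_def]; ring
          · rw [hb_def]; ring
        rw [e1, hga_def]
        simp only
        rw [c1, c2]
        apply sub a b ha hb hab (t - i) (r t - r i) (by omega)
        linarith [hd]
      calc ∑ i ∈ range t, f i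
          ≤ ∑ i ∈ range t, s⁻¹ * (ga (t - 1 - i) - ga (t - 1 - i + 1)) :=
            Finset.sum_le_sum hstep
        _ = ∑ j ∈ range t, s⁻¹ * (ga j - ga (j + 1)) :=
            Finset.sum_range_reflect (fun j => s⁻¹ * (ga j - ga (j + 1))) t
        _ = s⁻¹ * ∑ j ∈ range t, (ga j - ga (j + 1)) := by rw [Finset.mul_sum]
        _ = s⁻¹ * (ga 0 - ga t) := by rw [Finset.sum_range_sub' ga t]
    -- right bound
    set N := n - (t + 1) with hN_def
    have hRbound : ∑ i ∈ Ico (t + 1) n, f i ≤ s⁻¹ * (gb 0 - gb N) := by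
      rw [Finset.sum_Ico_eq_sum_range f (t + 1) n, ← hN_def]
      have hstep : ∀ j ∈ range N, f (t + 1 + j) ≤ s⁻¹ * (gb j - gb (j + 1)) := by
        intro j hj
        have hjN : j < N := Finset.mem_range.1 hj
        have hd := hchain t (j + 1) (by omega) (by omega)
        rw [show t + (j + 1) = t + 1 + j by omega] at hd
        have e1 : f (t + 1 + j) = (((r (t + 1 + j) - r t) - b) * ((r (t + 1 + j) - r t) + a))⁻¹ := by
          rw [hf_def]
          simp only
          rw [show (y - r (t + 1 + j)) * (y' - r (t + 1 + j))
            = ((r (t + 1 + j) - r t) - b) * ((r (t + 1 + j) - r t) + a) by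
              rw [ha_def, hb_def]; ring]
        rw [e1, hgb_def]
        simp only
        have c1 : ((j : ℝ) + 1) = ((j + 1 : ℕ) : ℝ) := by push_cast; ring
        rw [c1]
        apply sub b a hb ha (by linarith) (j + 1) (r (t + 1 + j) - r t) (by omega)
        push_cast at hd ⊢
        linarith [hd]
      calc ∑ j ∈ range N, f (t + 1 + j)
          ≤ ∑ j ∈ range N, s⁻¹ * (gb j - gb (j + 1)) := Finset.sum_le_sum hstep
        _ = s⁻¹ * ∑ j ∈ range N, (gb j - gb (j + 1)) := by rw [Finset.mul_sum]
        _ = s⁻¹ * (gb 0 - gb N) := by rw [Finset.sum_range_sub' gb N]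
    -- assemble
    have hga0 : ga 0 = b⁻¹ := by
      rw [hga_def]
      simp only [Nat.cast_zero]
      congr 1
      linarith
    have hgb0 : gb 0 = a⁻¹ := by
      rw [hgb_def]
      simp only [Nat.cast_zero]
      congr 1
      linarith
    have hgat : 0 < ga t := inv_pos.2 (hga_pos t)
    have hgbN : 0 < gb N := inv_pos.2 (hgb_pos N)
    have hkey : s⁻¹ * b⁻¹ + s⁻¹ * a⁻¹ = (a * b)⁻¹ := by
      rw [← hab]
      field_simp
    have hLR : (∑ i ∈ range t, f i) + ∑ i ∈ Ico (t + 1) n, f i = (a * b)⁻¹ := by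
      have := hzero
      rw [hsplit, hft] at this
      linarith
    have hsinv : 0 < s⁻¹ := inv_pos.2 hs
    rw [hga0, mul_sub] at hLbound
    rw [hgb0, mul_sub] at hRbound
    linarith [mul_pos hsinv hgat, mul_pos hsinv hgbN, hkey, hLR]


-- ===== part 2 helpers =====

lemma sorted_getD_le {l : List ℝ} (hl : List.Pairwise (· ≤ ·) l) {i j : ℕ}
    (hij : i ≤ j) (hj : j < l.length) : l.getD i 0 ≤ l.getD j 0 := by
  rcases eq_or_lt_of_le hij with rfl | h
  · exact le_refl _
  · rw [List.getD_eq_getElem l 0 (lt_trans h hj), List.getD_eq_getElem l 0 hj]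
    exact List.pairwise_iff_getElem.1 hl _ _ _ _ h

lemma strict_mono_of_gaps {n : ℕ} {r : ℕ → ℝ} {s : ℝ} (hs : 0 ≤ s)
    (hgap : ∀ i, i + 1 < n → r i + s < r (i + 1)) :
    ∀ a b, a < b → b < n → r a < r b := by
  intro a b hab hbn
  induction b with
  | zero => omega
  | succ b ih =>
      rcases Nat.lt_or_ge a b with h | h
      · have h1 := ih h (by omega)
        have h2 := hgap b (by omega)
        linarith
      · have : a = b := by omega
        subst this
        have h2 := hgap a (by omega)
        linarith

lemma two_le_count_of_getD_eq {l : List ℝ} {i : ℕ} (h : i + 1 < l.length)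
    (heq : l.getD i 0 = l.getD (i + 1) 0) :
    2 ≤ Multiset.count (l.getD i 0) (↑l : Multiset ℝ) := by
  have hi : i < l.length := by omega
  have hdrop : l.drop i = l.getD i 0 :: l.getD (i + 1) 0 :: l.drop (i + 2) := by
    rw [List.drop_eq_getElem_cons hi, List.drop_eq_getElem_cons h]
    rw [List.getD_eq_getElem l 0 hi, List.getD_eq_getElem l 0 h]
  have hsub : (↑(l.drop i) : Multiset ℝ) ≤ ↑l :=
    Multiset.coe_le.2 (List.drop_sublist i l).subperm
  have hcount : Multiset.count (l.getD i 0) (↑(l.drop i) : Multiset ℝ)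
      ≤ Multiset.count (l.getD i 0) (↑l : Multiset ℝ) :=
    Multiset.count_le_of_le _ hsub
  rw [hdrop, ← heq] at hcount
  rw [← Multiset.cons_coe, ← Multiset.cons_coe] at hcount
  rw [Multiset.count_cons_self, Multiset.count_cons_self] at hcount
  omega

lemma no_common_root {n : ℕ} {c lam : ℝ} (r : ℕ → ℝ) (hc : c ≠ 0) (hlam : lam ≠ 0)
    (hmono : ∀ a b, a < b → b < n → r a < r b) {y : ℝ}
    (hq : eval y ((C c * ∏ i ∈ range n, (X - C (r i)))
      - C lam * derivative (C c * ∏ i ∈ range n, (X - C (r i)))) = 0) :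
    ∀ i ∈ range n, y ≠ r i := by
  intro t ht hyt
  have htn : t < n := Finset.mem_range.1 ht
  have huniq : ∀ j ∈ range n, j ≠ t → y - r j ≠ 0 := by
    intro j hj hjt h0
    have hjn : j < n := Finset.mem_range.1 hj
    have : r j = r t := by rw [← hyt]; linarith [sub_eq_zero.1 h0]
    rcases lt_or_gt_of_ne hjt with hlt | hlt
    · exact absurd this (ne_of_lt (hmono j t hlt htn))
    · exact absurd this.symm (ne_of_lt (hmono t j hlt hjn))
  have hPy : eval y (C c * ∏ i ∈ range n, (X - C (r i))) = 0 := by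
    rw [eval_factored]
    apply mul_eq_zero_of_right
    apply Finset.prod_eq_zero ht
    rw [hyt, sub_self]
  rw [eval_sub, hPy, zero_sub, neg_eq_zero, eval_mul, eval_C] at hq
  have hP'y : eval y (derivative (C c * ∏ i ∈ range n, (X - C (r i)))) = 0 := by
    rcases mul_eq_zero.1 hq with h | h
    · exact absurd h hlam
    · exact h
  rw [eval_derivative_factored] at hP'y
  rcases mul_eq_zero.1 hP'y with h | h
  · exact hc h
  · have hsingle : ∑ i ∈ range n, ∏ j ∈ (range n).erase i, (y - r j)
        = ∏ j ∈ (range n).erase t, (y - r j) := by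
      apply Finset.sum_eq_single t
      · intro b hb hbt
        apply Finset.prod_eq_zero (Finset.mem_erase.2 ⟨Ne.symm hbt, ht⟩)
        rw [hyt, sub_self]
      · intro h'
        exact absurd ht h'
    rw [hsingle] at h
    have hne : ∀ j ∈ (range n).erase t, y - r j ≠ 0 := fun j hj =>
      huniq j (Finset.mem_of_mem_erase hj) (Finset.ne_of_mem_erase hj)
    exact (Finset.prod_ne_zero_iff.2 hne) h

lemma sq_eval (n : ℕ) (c : ℝ) (r : ℕ → ℝ) (y : ℝ) :
    (eval y (derivative (C c * ∏ i ∈ range n, (X - C (r i)))))^2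
      - eval y (C c * ∏ i ∈ range n, (X - C (r i)))
        * eval y (derivative (derivative (C c * ∏ i ∈ range n, (X - C (r i)))))
    = c^2 * ∑ i ∈ range n, ∏ j ∈ (range n).erase i, (y - r j)^2 := by
  have hid := congrArg (eval y) (sq_identity n r)
  rw [eval_sub, eval_pow, eval_mul, eval_finset_sum] at hid
  have hterm : ∀ i ∈ range n, eval y (∏ j ∈ (range n).erase i, (X - C (r j))^2)
      = ∏ j ∈ (range n).erase i, (y - r j)^2 := by
    intro i _
    simp [eval_prod]
  rw [Finset.sum_congr rfl hterm] at hid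
  rw [derivative_C_mul, derivative_C_mul]
  rw [eval_mul, eval_C, eval_mul, eval_C, eval_mul, eval_C]
  linear_combination c^2 * hid

lemma no_double_root {n : ℕ} {c lam : ℝ} (hn : 1 ≤ n) (r : ℕ → ℝ) (hc : c ≠ 0)
    (hlam : lam ≠ 0) {y : ℝ} (hyne : ∀ i ∈ range n, y ≠ r i)
    (hq : eval y ((C c * ∏ i ∈ range n, (X - C (r i)))
      - C lam * derivative (C c * ∏ i ∈ range n, (X - C (r i)))) = 0)
    (hq' : eval y (derivative ((C c * ∏ i ∈ range n, (X - C (r i)))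
      - C lam * derivative (C c * ∏ i ∈ range n, (X - C (r i))))) = 0) :
    False := by
  have e1 : ∀ g : ℝ[X], eval y (g - C lam * derivative g)
      = eval y g - lam * eval y (derivative g) := by
    intro g; simp
  have e2 : ∀ g : ℝ[X], eval y (derivative (g - C lam * derivative g))
      = eval y (derivative g) - lam * eval y (derivative (derivative g)) := by
    intro g; simp [derivative_sub, derivative_C_mul]
  rw [e1, sub_eq_zero] at hq
  rw [e2, sub_eq_zero] at hq'
  have hkey := sq_eval n c r y
  have hpos : 0 < c^2 * ∑ i ∈ range n, ∏ j ∈ (range n).erase i, (y - r j)^2 := by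
    apply mul_pos ((sq_nonneg c).lt_of_ne (Ne.symm (pow_ne_zero 2 hc)))
    apply Finset.sum_pos'
    · intro i _
      exact Finset.prod_nonneg fun j _ => sq_nonneg _
    · refine ⟨0, Finset.mem_range.2 (by omega), ?_⟩
      apply Finset.prod_pos
      intro j hj
      have : y - r j ≠ 0 := sub_ne_zero.2 (hyne j (Finset.mem_of_mem_erase hj))
      exact (sq_nonneg _).lt_of_ne (Ne.symm (pow_ne_zero 2 this))
  have hzero : c^2 * ∑ i ∈ range n, ∏ j ∈ (range n).erase i, (y - r j)^2 = 0 := by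
    rw [← hkey, hq, hq']
    ring
  linarith

-- ===== main theorem =====

/-- For any hyperbolic polynomial `p` and any real `λ`, the polynomial `p - λ p'`
is hyperbolic and `M(p - λ p') ≥ M(p)`. -/
theorem stmt_0 (p : Polynomial ℝ) (hp : Hyperbolic p) (lam : ℝ) :
    Hyperbolic (p - Polynomial.C lam * Polynomial.derivative p) ∧
    mesh p ≤ mesh (p - Polynomial.C lam * Polynomial.derivative p) := by

  rcases eq_or_ne lam 0 with rfl | hlam
  · simp only [map_zero, zero_mul, sub_zero]
    exact ⟨hp, le_rfl⟩
  rcases Nat.eq_zero_or_pos p.natDegree with hn0 | hn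
  · have hd : derivative p = 0 := by
      conv_lhs => rw [eq_C_of_natDegree_eq_zero hn0]
      exact derivative_C
    rw [hd, mul_zero, sub_zero]
    exact ⟨hp, le_rfl⟩
  obtain ⟨hqhyp, hq_deg⟩ := hyperbolic_target p hp lam hn
  refine ⟨hqhyp, ?_⟩
  set q := p - C lam * derivative p with hq_def
  set n := p.natDegree with hn_def
  set c := p.leadingCoeff with hc_def
  set ρ : ℕ → ℝ := fun i => (sortedRoots p).getD i 0 with hρ_def
  have hfac : p = C c * ∏ i ∈ range n, (X - C (ρ i)) := hyp_factorization p hp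
  have hp0 : p ≠ 0 := by
    intro h
    rw [h] at hn_def
    simp at hn_def
    omega
  have hc0 : c ≠ 0 := leadingCoeff_ne_zero.2 hp0
  have hq0 : q ≠ 0 := by
    intro h
    rw [h] at hq_deg
    simp at hq_deg
    omega
  have hXlen : (sortedRoots p).length = n := sortedRoots_length p hp
  have hYlen : (sortedRoots q).length = n := by
    rw [sortedRoots_length q hqhyp, hq_deg]
  conv_rhs => rw [mesh]
  refine le_iInf₂ fun i hi => ?_
  by_contra hcon
  rw [not_le] at hcon
  set y := (sortedRoots q).getD i 0 with hy_def
  set y' := (sortedRoots q).getD (i + 1) 0 with hy'_def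
  have hiq : i + 1 < (sortedRoots q).length := by
    have := Finset.mem_range.1 hi
    omega
  have hyy' : y ≤ y' :=
    sorted_getD_le (Multiset.pairwise_sort _ _) (by omega) hiq
  have hs0 : (0:ℝ) ≤ y' - y := by linarith
  -- gaps of p exceed y' - y
  have hgap : ∀ j, j + 1 < n → ρ j + (y' - y) < ρ (j + 1) := by
    intro j hj
    have h1 : mesh p ≤ ENNReal.ofReal (ρ (j + 1) - ρ j) := by
      have hjmem : j ∈ Finset.range ((sortedRoots p).length - 1) :=
        Finset.mem_range.2 (by omega)
      exact iInf₂_le j hjmem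
    have h2 : ENNReal.ofReal (y' - y) < ENNReal.ofReal (ρ (j + 1) - ρ j) :=
      lt_of_lt_of_le hcon h1
    rw [ENNReal.ofReal_lt_ofReal_iff_of_nonneg hs0] at h2
    linarith
  have hmono : ∀ a b, a < b → b < n → ρ a < ρ b := strict_mono_of_gaps hs0 hgap
  -- y and y' are roots of q
  have hyroot : eval y q = 0 := by
    have hymem : y ∈ q.roots := by
      rw [← sortedRoots_coe, hy_def,
        List.getD_eq_getElem (sortedRoots q) 0 (by omega : i < (sortedRoots q).length)]
      exact Multiset.mem_coe.2 (List.getElem_mem _)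
    exact (mem_roots hq0).1 hymem
  have hy'root : eval y' q = 0 := by
    have hymem : y' ∈ q.roots := by
      rw [← sortedRoots_coe, hy'_def, List.getD_eq_getElem (sortedRoots q) 0 hiq]
      exact Multiset.mem_coe.2 (List.getElem_mem _)
    exact (mem_roots hq0).1 hymem
  have hq_eval : eval y ((C c * ∏ i ∈ range n, (X - C (ρ i)))
      - C lam * derivative (C c * ∏ i ∈ range n, (X - C (ρ i)))) = 0 := by
    rw [← hfac]
    exact hyroot
  have hq'_eval : eval y' ((C c * ∏ i ∈ range n, (X - C (ρ i)))
      - C lam * derivative (C c * ∏ i ∈ range n, (X - C (ρ i)))) = 0 := by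
    rw [← hfac]
    exact hy'root
  have hyne := no_common_root ρ hc0 hlam hmono hq_eval
  have hy'ne := no_common_root ρ hc0 hlam hmono hq'_eval
  rcases eq_or_lt_of_le hyy' with heq | hlt
  · -- y = y' : double root of q, impossible
    have hcount : 2 ≤ Multiset.count y (↑(sortedRoots q) : Multiset ℝ) :=
      two_le_count_of_getD_eq hiq (by rw [← hy_def, ← hy'_def, ← heq])
    rw [sortedRoots_coe, count_roots] at hcount
    obtain ⟨u, hu⟩ := dvd_trans (pow_dvd_pow (X - C y) hcount) (pow_rootMultiplicity_dvd q y)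
    have hqd0 : eval y (derivative q) = 0 := by
      rw [hu]
      simp [derivative_mul, derivative_pow]
    apply no_double_root hn ρ hc0 hlam hyne hq_eval
    rw [← hfac]
    exact hqd0
  · -- y < y' : partial fraction argument
    have hsy := sum_inv_eq ρ hc0 hyne hq_eval
    have hsy' := sum_inv_eq ρ hc0 hy'ne hq'_eval
    have hzero : ∑ j ∈ range n, ((y - ρ j) * (y' - ρ j))⁻¹ = 0 := by
      have hdiff : ∑ j ∈ range n, ((y - ρ j)⁻¹ - (y' - ρ j)⁻¹) = 0 := by
        rw [Finset.sum_sub_distrib, hsy, hsy', sub_self]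
      have hterm : ∀ j ∈ range n, (y - ρ j)⁻¹ - (y' - ρ j)⁻¹
          = (y' - y) * ((y - ρ j) * (y' - ρ j))⁻¹ := by
        intro j hj
        have h1 : y - ρ j ≠ 0 := sub_ne_zero.2 (hyne j hj)
        have h2 : y' - ρ j ≠ 0 := sub_ne_zero.2 (hy'ne j hj)
        field_simp
        try ring
      rw [Finset.sum_congr rfl hterm, ← Finset.mul_sum] at hdiff
      rcases mul_eq_zero.1 hdiff with h | h
      · exact absurd h (ne_of_gt (sub_pos.2 hlt))
      · exact h
    exact core_lemma hn ρ hlt hgap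
      (fun j hj => ⟨Ne.symm (hyne j hj), Ne.symm (hy'ne j hj)⟩) hzero


end
end

section
/- Let Q(t) = a_0 + a_1 t + ... + a_k t^k be a real polynomial with all roots real, and let T = a_0 + a_1 (d/dx) + ... + a_k (d/dx)^k be the corresponding linear differential operator with constant coefficients. Then for every real polynomial p with all roots real, the polynomial T(p) has all real roots and mesh M(T(p)) ≥ M(p). -/
open Polynomial
open scoped ENNReal

noncomputable section

section HPproof
open Filter Set

namespace HP


lemma sortedRoots_sorted (p : Polynomial ℝ) : (sortedRoots p).Pairwise (· ≤ ·) :=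
  Multiset.pairwise_sort _ _

lemma sortedRoots_coe (p : Polynomial ℝ) : (↑(sortedRoots p) : Multiset ℝ) = p.roots :=
  Multiset.sort_eq _ _

lemma length_sortedRoots (p : Polynomial ℝ) :
    (sortedRoots p).length = Multiset.card p.roots := by
  rw [← sortedRoots_coe]; rfl

lemma mem_sortedRoots {p : Polynomial ℝ} {a : ℝ} : a ∈ sortedRoots p ↔ a ∈ p.roots :=
  Multiset.mem_sort _

lemma sortedRoots_le {p : Polynomial ℝ} {i j : ℕ} (hij : i ≤ j)
    (hj : j < (sortedRoots p).length) :
    (sortedRoots p).getD i 0 ≤ (sortedRoots p).getD j 0 := by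
  rcases eq_or_lt_of_le hij with rfl | hlt
  · exact le_refl _
  · have hi : i < (sortedRoots p).length := lt_trans hlt hj
    rw [List.getD_eq_getElem _ _ hi, List.getD_eq_getElem _ _ hj]
    exact (List.pairwise_iff_getElem.1 (sortedRoots_sorted p)) i j hi hj hlt

lemma sortedRoots_getD_mem {p : Polynomial ℝ} {i : ℕ} (hi : i < (sortedRoots p).length) :
    (sortedRoots p).getD i 0 ∈ p.roots := by
  rw [List.getD_eq_getElem _ _ hi]
  exact mem_sortedRoots.1 (List.getElem_mem _)

lemma exists_index_of_root {p : Polynomial ℝ} {a : ℝ} (ha : a ∈ p.roots) :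
    ∃ i, ∃ h : i < (sortedRoots p).length, (sortedRoots p).getD i 0 = a := by
  obtain ⟨i, hi, hia⟩ := List.mem_iff_getElem.1 (mem_sortedRoots.2 ha)
  exact ⟨i, hi, by rw [List.getD_eq_getElem _ _ hi, hia]⟩

lemma mesh_le_gap {p : Polynomial ℝ} {i : ℕ} (hi : i + 1 < (sortedRoots p).length) :
    mesh p ≤ ENNReal.ofReal ((sortedRoots p).getD (i + 1) 0 - (sortedRoots p).getD i 0) := by
  have hmem : i ∈ Finset.range ((sortedRoots p).length - 1) := by
    rw [Finset.mem_range]; omega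
  exact biInf_le _ hmem

lemma le_mesh {p : Polynomial ℝ} {c : ℝ≥0∞} :
    c ≤ mesh p ↔ ∀ i, i + 1 < (sortedRoots p).length →
      c ≤ ENNReal.ofReal ((sortedRoots p).getD (i + 1) 0 - (sortedRoots p).getD i 0) := by
  rw [mesh, le_iInf₂_iff]
  constructor
  · intro h i hi
    exact h i (by rw [Finset.mem_range]; omega)
  · intro h i hi
    rw [Finset.mem_range] at hi
    exact h i (by omega)

lemma mesh_eq_top {p : Polynomial ℝ} (h : Multiset.card p.roots ≤ 1) : mesh p = ⊤ := by
  have : (sortedRoots p).length - 1 = 0 := by rw [length_sortedRoots]; omega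
  rw [mesh, this]
  simp

lemma gap_ge {p : Polynomial ℝ} {m : ℝ} (hm : ENNReal.ofReal m ≤ mesh p) {i : ℕ}
    (hi : i + 1 < (sortedRoots p).length) :
    (sortedRoots p).getD i 0 + m ≤ (sortedRoots p).getD (i + 1) 0 := by
  have h1 := le_mesh.1 hm i hi
  have h2 : (sortedRoots p).getD i 0 ≤ (sortedRoots p).getD (i + 1) 0 :=
    sortedRoots_le (by omega) hi
  have := (ENNReal.ofReal_le_ofReal_iff (by linarith)).1 h1
  linarith

lemma multi_gap {p : Polynomial ℝ} {m : ℝ} (hm : ENNReal.ofReal m ≤ mesh p) (hm0 : 0 ≤ m)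
    {i j : ℕ} (hij : i ≤ j) (hj : j < (sortedRoots p).length) :
    (sortedRoots p).getD i 0 + (j - i : ℕ) * m ≤ (sortedRoots p).getD j 0 := by
  induction j with
  | zero => interval_cases i; simp
  | succ j ih =>
    rcases Nat.lt_or_ge i (j+1) with hlt | hge
    · have hij' : i ≤ j := by omega
      have := ih hij' (by omega)
      have hg := gap_ge hm (i := j) hj
      have hc : ((j + 1 - i : ℕ) : ℝ) = ((j - i : ℕ) : ℝ) + 1 := by
        rw [Nat.cast_sub (by omega), Nat.cast_sub hij']
        push_cast; ring
      rw [hc]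
      linarith
    · have : i = j + 1 := by omega
      subst this
      simp

lemma ofReal_le_mesh {p : Polynomial ℝ} {m : ℝ}
    (h : ∀ i, i + 1 < (sortedRoots p).length →
      (sortedRoots p).getD i 0 + m ≤ (sortedRoots p).getD (i + 1) 0) :
    ENNReal.ofReal m ≤ mesh p :=
  le_mesh.2 fun i hi => ENNReal.ofReal_le_ofReal (by have := h i hi; linarith)



/-- the auxiliary function e^{-rx} p(x) -/
def efun (r : ℝ) (p : Polynomial ℝ) : ℝ → ℝ := fun x => Real.exp (-(r * x)) * p.eval x

lemma efun_hasDerivAt (r : ℝ) (p : Polynomial ℝ) (x : ℝ) :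
    HasDerivAt (efun r p) (Real.exp (-(r * x)) * (derivative p - C r * p).eval x) x := by
  have hg : HasDerivAt (fun y : ℝ => -(r * y)) (-r) x := by
    simpa using ((hasDerivAt_id x).const_mul (-r))
  have he : HasDerivAt (fun y : ℝ => Real.exp (-(r * y))) (Real.exp (-(r * x)) * (-r)) x :=
    (Real.hasDerivAt_exp _).comp x hg
  have := he.mul (p.hasDerivAt x)
  refine HasDerivAt.congr_deriv this ?_
  simp [eval_sub, eval_mul]
  ring

lemma efun_continuous (r : ℝ) (p : Polynomial ℝ) : Continuous (efun r p) := by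
  apply Continuous.mul
  · exact Real.continuous_exp.comp (by continuity)
  · exact p.continuous

lemma rolle_between {r : ℝ} {p : Polynomial ℝ} {x y : ℝ} (hxy : x < y)
    (hx : p.eval x = 0) (hy : p.eval y = 0) :
    ∃ z ∈ Set.Ioo x y, (derivative p - C r * p).eval z = 0 := by
  obtain ⟨z, hz, hz0⟩ := exists_deriv_eq_zero hxy ((efun_continuous r p).continuousOn)
    (by simp [efun, hx, hy])
  refine ⟨z, hz, ?_⟩
  have := (efun_hasDerivAt r p z).deriv
  rw [this] at hz0
  have hexp : Real.exp (-(r * z)) ≠ 0 := Real.exp_ne_zero _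
  exact (mul_eq_zero.1 hz0).resolve_left hexp

lemma efun_tendsto {r : ℝ} (hr : 0 < r) (p : Polynomial ℝ) :
    Tendsto (efun r p) atTop (nhds 0) := by
  have h1 : Tendsto (fun x : ℝ => r * x) atTop atTop :=
    Tendsto.const_mul_atTop hr tendsto_id
  have h2 := (p.comp (C r⁻¹ * X)).tendsto_div_exp_atTop
  have h3 := h2.comp h1
  refine h3.congr fun x => ?_
  simp only [Function.comp, efun, eval_comp, eval_mul, eval_C, eval_X]
  rw [inv_mul_cancel_left₀ (ne_of_gt hr), Real.exp_neg, div_eq_mul_inv, mul_comm]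

lemma exists_root_gt_aux {r : ℝ} (hr : 0 < r) {p : Polynomial ℝ} {a c : ℝ}
    (ha : p.eval a = 0) (hac : a < c) (hc : 0 < p.eval c) :
    ∃ z, a < z ∧ (derivative p - C r * p).eval z = 0 := by
  set f := efun r p with hf
  have hfc : 0 < f c := by
    apply mul_pos (Real.exp_pos _) hc
  have hev : ∀ᶠ x in atTop, f x < f c :=
    Tendsto.eventually_lt_const hfc (efun_tendsto hr p)
  obtain ⟨B₀, hB₀⟩ := eventually_atTop.1 hev
  set B := max B₀ (c + 1) with hB
  have hcB : c < B := lt_of_lt_of_le (by linarith) (le_max_right _ _)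
  have haB : a < B := lt_trans hac hcB
  obtain ⟨w, hwmem, hwmax⟩ := (isCompact_Icc (a := a) (b := B)).exists_isMaxOn
    (Set.nonempty_Icc.2 (le_of_lt haB)) ((efun_continuous r p).continuousOn)
  have hwc : f c ≤ f w := hwmax (Set.mem_Icc.2 ⟨le_of_lt hac, le_of_lt hcB⟩)
  have hfa : f a = 0 := by simp [hf, efun, ha]
  have hwa : w ≠ a := by
    intro h; rw [h, hfa] at hwc; linarith
  have hwB : w ≠ B := by
    intro h
    have : f B < f c := hB₀ B (le_max_left _ _)
    rw [h] at hwc; linarith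
  have hwIoo : w ∈ Set.Ioo a B := by
    rcases Set.mem_Icc.1 hwmem with ⟨h1, h2⟩
    exact ⟨lt_of_le_of_ne h1 (Ne.symm hwa), lt_of_le_of_ne h2 hwB⟩
  have hloc : IsLocalMax f w := hwmax.isLocalMax (Icc_mem_nhds hwIoo.1 hwIoo.2)
  have hder := hloc.deriv_eq_zero
  rw [(efun_hasDerivAt r p w).deriv] at hder
  refine ⟨w, hwIoo.1, ?_⟩
  exact (mul_eq_zero.1 hder).resolve_left (Real.exp_ne_zero _)

lemma exists_root_gt {r : ℝ} (hr : 0 < r) {p : Polynomial ℝ} (hp : p ≠ 0) {a : ℝ}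
    (ha : p.eval a = 0) :
    ∃ z, a < z ∧ (derivative p - C r * p).eval z = 0 := by
  obtain ⟨c, hc1, hc2⟩ := (Set.Ioi_infinite a).exists_notMem_finite
    (Polynomial.finite_setOf_isRoot hp)
  have hc : p.eval c ≠ 0 := hc2
  rcases lt_or_gt_of_ne hc with hneg | hpos
  · obtain ⟨z, hz1, hz2⟩ := exists_root_gt_aux hr (p := -p) (by simp [ha]) hc1
      (by simp; linarith)
    refine ⟨z, hz1, ?_⟩
    have : (derivative (-p) - C r * (-p)) = -(derivative p - C r * p) := by
      simp; ring
    rw [this] at hz2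
    simp only [eval_neg, neg_eq_zero] at hz2
    exact hz2
  · exact exists_root_gt_aux hr ha hc1 hpos



lemma step_degree {r : ℝ} (hr : r ≠ 0) {p : Polynomial ℝ} (hp : p ≠ 0) :
    (derivative p - C r * p).degree = p.degree := by
  have h1 : (C r * p).degree = p.degree := degree_C_mul hr
  have h2 : (derivative p).degree < (C r * p).degree := by
    rw [h1]; exact degree_derivative_lt hp
  rw [degree_sub_eq_right_of_degree_lt h2, h1]

lemma step_ne_zero {r : ℝ} (hr : r ≠ 0) {p : Polynomial ℝ} (hp : p ≠ 0) :
    derivative p - C r * p ≠ 0 := by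
  intro h
  have := step_degree hr hp
  rw [h, degree_zero] at this
  exact hp (degree_eq_bot.1 this.symm)

lemma step_natDegree {r : ℝ} (hr : r ≠ 0) {p : Polynomial ℝ} (hp : p ≠ 0) :
    (derivative p - C r * p).natDegree = p.natDegree :=
  natDegree_eq_of_degree_eq (step_degree hr hp)

lemma step_rootMultiplicity {r : ℝ} {p : Polynomial ℝ} (hq : derivative p - C r * p ≠ 0)
    (x : ℝ) :
    rootMultiplicity x p - 1 ≤ rootMultiplicity x (derivative p - C r * p) := by
  by_cases hd : derivative p = 0
  · -- p is a constant, so rootMultiplicity x p ≤ ?; p = C c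
    by_cases hp : p = 0
    · simp [hp]
    · rw [eq_C_of_derivative_eq_zero hd]
      rw [rootMultiplicity_C]
      omega
  by_cases hp : p = 0
  · simp [hp]
  have hm := rootMultiplicity_sub_one_le_derivative_rootMultiplicity p x
  have h1 : (X - C x) ^ (rootMultiplicity x p - 1) ∣ p :=
    dvd_trans (pow_dvd_pow _ (Nat.sub_le _ _)) (pow_rootMultiplicity_dvd p x)
  have h2 : (X - C x) ^ (rootMultiplicity x p - 1) ∣ derivative p :=
    (le_rootMultiplicity_iff hd).1 hm
  have h3 : (X - C x) ^ (rootMultiplicity x p - 1) ∣ derivative p - C r * p :=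
    dvd_sub h2 (Dvd.dvd.mul_left h1 _)
  exact (le_rootMultiplicity_iff hq).2 h3

lemma card_roots_le_step {r : ℝ} (hr : 0 < r) {p : Polynomial ℝ} (hp : p ≠ 0) :
    Multiset.card p.roots ≤ Multiset.card (derivative p - C r * p).roots := by
  set q : Polynomial ℝ := derivative p - C r * p with hqdef
  have hq : q ≠ 0 := step_ne_zero (ne_of_gt hr) hp
  by_cases hroots : p.roots = 0
  · simp [hroots]
  have hne : p.roots.toFinset.Nonempty := Multiset.toFinset_nonempty.2 hroots
  set A := p.roots.toFinset with hA
  set a := A.max' hne with ha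
  have haroot : p.eval a = 0 := by
    have : a ∈ p.roots := Multiset.mem_toFinset.1 (A.max'_mem hne)
    exact (mem_roots hp).1 this
  obtain ⟨z₀, hz₀a, hz₀root⟩ := exists_root_gt hr hp haroot
  -- choose M bigger than everything
  set F : Finset ℝ := insert z₀ (A ∪ q.roots.toFinset) with hF
  have hFne : F.Nonempty := Finset.insert_nonempty _ _
  set M := F.max' hFne + 1 with hM
  have hMgt : ∀ y ∈ F, y < M := by
    intro y hy
    have := F.le_max' y hy
    rw [hM]; linarith
  have hz₀M : z₀ < M := hMgt _ (Finset.mem_insert_self _ _)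
  have hAM : ∀ y ∈ A, y < M := fun y hy =>
    hMgt y (Finset.mem_insert_of_mem (Finset.mem_union_left _ hy))
  have hqM : ∀ y ∈ q.roots.toFinset, y < M := fun y hy =>
    hMgt y (Finset.mem_insert_of_mem (Finset.mem_union_right _ hy))
  have hMA : M ∉ A := fun h => lt_irrefl M (hAM M h)
  have hMq : M ∉ q.roots.toFinset := fun h => lt_irrefl M (hqM M h)
  set s : Finset ℝ := insert M A with hs
  set t : Finset ℝ := q.roots.toFinset with ht
  have hinter : ∀ x ∈ s, ∀ y ∈ s, x < y → (∀ z ∈ s, z ∉ Set.Ioo x y) →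
      ∃ z ∈ t, x < z ∧ z < y := by
    intro x hx y hy hxy hgap
    rcases Finset.mem_insert.1 hx with rfl | hxA
    · -- x = M : impossible since y ≤ ... y ∈ s means y = M or root < M
      rcases Finset.mem_insert.1 hy with rfl | hyA
      · exact absurd hxy (lt_irrefl _)
      · exact absurd hxy (not_lt.2 (le_of_lt (hAM _ hyA)))
    rcases Finset.mem_insert.1 hy with rfl | hyA
    · -- y = M : x is the largest root
      have hax : a = x := by
        by_contra hne'
        have hxa : x ≤ a := A.le_max' x hxA
        have : a ∈ Set.Ioo x M := ⟨lt_of_le_of_ne hxa (fun h => hne' h.symm),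
          hAM a (A.max'_mem hne)⟩
        exact hgap a (Finset.mem_insert_of_mem (A.max'_mem hne)) this
      refine ⟨z₀, Multiset.mem_toFinset.2 ((mem_roots hq).2 hz₀root), ?_, ?_⟩
      · rw [← hax]; exact hz₀a
      · exact hz₀M
    · -- both roots of p
      have hxr : p.eval x = 0 := (mem_roots hp).1 (Multiset.mem_toFinset.1 hxA)
      have hyr : p.eval y = 0 := (mem_roots hp).1 (Multiset.mem_toFinset.1 hyA)
      obtain ⟨z, hz, hz0⟩ := rolle_between (r := r) hxy hxr hyr
      exact ⟨z, Multiset.mem_toFinset.2 ((mem_roots hq).2 hz0), hz.1, hz.2⟩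
  have hcard := Finset.card_le_diff_of_interleaved hinter
  have hscard : s.card = A.card + 1 := Finset.card_insert_of_notMem hMA
  have hsub : t \ s ⊆ t \ A := Finset.sdiff_subset_sdiff (Finset.Subset.refl _)
    (Finset.subset_insert _ _)
  have hdiff : A.card ≤ (t \ A).card := by
    have := Finset.card_le_card hsub
    omega
  -- now the counting calc
  calc
    Multiset.card p.roots = ∑ x ∈ A, p.roots.count x :=
      (Multiset.toFinset_sum_count_eq _).symm
    _ = ∑ x ∈ A, (p.roots.count x - 1 + 1) :=
      (Finset.sum_congr rfl fun x hx => by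
        have : 0 < p.roots.count x := Multiset.count_pos.2 (Multiset.mem_toFinset.1 hx)
        omega).symm
    _ = (∑ x ∈ A, (p.rootMultiplicity x - 1)) + A.card := by
      simp only [Finset.sum_add_distrib, Finset.card_eq_sum_ones, count_roots]
    _ ≤ (∑ x ∈ A, q.rootMultiplicity x) + (t \ A).card :=
      add_le_add (Finset.sum_le_sum fun x _ => step_rootMultiplicity hq x) hdiff
    _ ≤ (∑ x ∈ A, q.roots.count x) + ∑ x ∈ t \ A, q.roots.count x := by
      refine add_le_add (le_of_eq (Finset.sum_congr rfl fun x _ => (count_roots _).symm)) ?_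
      rw [Finset.card_eq_sum_ones]
      refine Finset.sum_le_sum fun x hx => ?_
      have : x ∈ t := (Finset.mem_sdiff.1 hx).1
      exact Nat.succ_le_iff.2 (Multiset.count_pos.2 (Multiset.mem_toFinset.1 this))
    _ = ∑ x ∈ A ∪ (t \ A), q.roots.count x := by
      rw [Finset.sum_union Finset.disjoint_sdiff]
    _ = ∑ x ∈ t, q.roots.count x := by
      refine (Finset.sum_subset ?_ ?_).symm
      · intro x hx
        by_cases hxA : x ∈ A
        · exact Finset.mem_union_left _ hxA
        · exact Finset.mem_union_right _ (Finset.mem_sdiff.2 ⟨hx, hxA⟩)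
      · intro x _ hxt
        exact Multiset.count_eq_zero.2 (fun h => hxt (Multiset.mem_toFinset.2 h))
    _ = Multiset.card q.roots := Multiset.toFinset_sum_count_eq _


lemma hyperbolic_zero : Hyperbolic 0 := by
  simp [Hyperbolic]

lemma hyperbolic_deriv {p : Polynomial ℝ} (hp : Hyperbolic p) :
    Hyperbolic (derivative p) := by
  by_cases h0 : p.natDegree = 0
  · obtain ⟨c, rfl⟩ := natDegree_eq_zero.1 h0
    simp [Hyperbolic]
  have hd : (derivative p).degree = ((p.natDegree - 1 : ℕ) : WithBot ℕ) :=
    degree_derivative_eq p (Nat.pos_of_ne_zero h0)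
  have hnd : (derivative p).natDegree = p.natDegree - 1 := natDegree_eq_of_degree_eq_some hd
  have hle := card_roots' (derivative p)
  have hge : p.natDegree - 1 ≤ Multiset.card (derivative p).roots := by
    have := p.card_roots_le_derivative
    rw [hp] at this
    omega
  rw [Hyperbolic, hnd]
  omega

lemma hyperbolic_step_pos {r : ℝ} (hr : 0 < r) {p : Polynomial ℝ} (hp : Hyperbolic p) :
    Hyperbolic (derivative p - C r * p) := by
  by_cases h0 : p = 0
  · simp [h0, hyperbolic_zero]
  have h1 := card_roots_le_step hr h0
  have h2 := card_roots' (derivative p - C r * p)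
  rw [step_natDegree (ne_of_gt hr) h0] at h2
  rw [Hyperbolic, step_natDegree (ne_of_gt hr) h0]
  rw [Hyperbolic] at hp
  omega

/-! ### Reflection -/

lemma refl_refl (p : Polynomial ℝ) : (p.comp (-X)).comp (-X) = p := by
  rw [comp_assoc]
  simp

lemma refl_ne_zero {p : Polynomial ℝ} (hp : p ≠ 0) : p.comp (-X) ≠ 0 := by
  intro h
  apply hp
  rw [← refl_refl p, h, zero_comp]

lemma natDegree_refl (p : Polynomial ℝ) : (p.comp (-X)).natDegree = p.natDegree := by
  rw [natDegree_comp]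
  simp

lemma rootMultiplicity_refl_le (p : Polynomial ℝ) (a : ℝ) (hp : p ≠ 0) :
    rootMultiplicity (-a) p ≤ rootMultiplicity a (p.comp (-X)) := by
  obtain ⟨c, hc⟩ := pow_rootMultiplicity_dvd p (-a)
  have hdvd : (X - C a) ^ (rootMultiplicity (-a) p) ∣ p.comp (-X) := by
    have : p.comp (-X) = ((X - C (-a)) ^ rootMultiplicity (-a) p).comp (-X) * c.comp (-X) := by
      rw [← mul_comp, ← hc]
    rw [this, pow_comp, sub_comp, X_comp, C_comp]
    have heq : (-X - C (-a) : Polynomial ℝ) = -(X - C a) := by rw [C_neg]; ring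
    rw [heq, neg_pow]
    exact ((dvd_mul_left _ _).mul_right _)
  exact (le_rootMultiplicity_iff (refl_ne_zero hp)).2 hdvd

lemma rootMultiplicity_refl (p : Polynomial ℝ) (a : ℝ) :
    rootMultiplicity a (p.comp (-X)) = rootMultiplicity (-a) p := by
  by_cases hp : p = 0
  · simp [hp]
  refine le_antisymm ?_ (rootMultiplicity_refl_le p a hp)
  have h2 := rootMultiplicity_refl_le (p.comp (-X)) (-a) (refl_ne_zero hp)
  rw [refl_refl, neg_neg] at h2
  exact h2

lemma roots_refl (p : Polynomial ℝ) :
    (p.comp (-X)).roots = p.roots.map (fun x => -x) := by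
  by_cases hp : p = 0
  · simp [hp]
  classical
  refine Multiset.ext.2 fun b => ?_
  rw [count_roots, rootMultiplicity_refl]
  have hinj : Function.Injective (fun x : ℝ => -x) := fun x y h => by simpa using h
  have : b = (fun x : ℝ => -x) (-b) := by simp
  rw [this, Multiset.count_map_eq_count' _ _ hinj, ← count_roots]
  simp

lemma hyperbolic_refl {p : Polynomial ℝ} (hp : Hyperbolic p) : Hyperbolic (p.comp (-X)) := by
  rw [Hyperbolic, roots_refl, Multiset.card_map, natDegree_refl]
  exact hp

lemma mesh_congr {p q : Polynomial ℝ} (h : p.roots = q.roots) : mesh p = mesh q := by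
  have hs : sortedRoots p = sortedRoots q := by rw [sortedRoots, h, sortedRoots]
  rw [mesh, hs, mesh]

lemma reverse_map_neg_sorted {l : List ℝ} (h : l.Pairwise (· ≤ ·)) :
    ((l.map (fun x : ℝ => -x)).reverse).Pairwise (· ≤ ·) := by
  rw [List.pairwise_reverse, List.pairwise_map]
  exact h.imp (fun hab => by simpa using hab)

lemma getD_reverse_map_neg (l : List ℝ) (i : ℕ) (h : i < l.length) :
    ((l.map (fun x : ℝ => -x)).reverse).getD i 0 = -(l.getD (l.length - 1 - i) 0) := by
  have hlen : ((l.map (fun x : ℝ => -x)).reverse).length = l.length := by simp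
  rw [List.getD_eq_getElem _ _ (by omega)]
  rw [List.getD_eq_getElem _ _ (by omega)]
  rw [List.getElem_reverse, List.getElem_map]
  congr 2
  simp

lemma sortedRoots_refl (p : Polynomial ℝ) :
    sortedRoots (p.comp (-X)) = ((sortedRoots p).map (fun x : ℝ => -x)).reverse := by
  have h1 : (↑(((sortedRoots p).map (fun x : ℝ => -x)).reverse) : Multiset ℝ)
      = (p.comp (-X)).roots := by
    rw [Multiset.coe_reverse, roots_refl, ← sortedRoots_coe]
    simp
  have h2 := reverse_map_neg_sorted (sortedRoots_sorted p)
  exact List.Perm.eq_of_pairwise' (sortedRoots_sorted _) h2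
    (Multiset.coe_eq_coe.1 (by rw [h1, ← sortedRoots_coe]))

lemma mesh_refl_le (p : Polynomial ℝ) : mesh (p.comp (-X)) ≤ mesh p := by
  refine le_mesh.2 fun j hj => ?_
  set l := sortedRoots p with hl
  set n := l.length with hn
  have hlen : (sortedRoots (p.comp (-X))).length = n := by
    rw [sortedRoots_refl]; simp [hn, hl]
  have hj' : j + 1 < n := hj
  set i := n - 2 - j with hi
  have hi1 : i + 1 < (sortedRoots (p.comp (-X))).length := by rw [hlen]; omega
  have e1 : (sortedRoots (p.comp (-X))).getD (i+1) 0 = -(l.getD (n - 1 - (i+1)) 0) := by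
    rw [sortedRoots_refl]; exact getD_reverse_map_neg l (i+1) (by omega)
  have e0 : (sortedRoots (p.comp (-X))).getD i 0 = -(l.getD (n - 1 - i) 0) := by
    rw [sortedRoots_refl]; exact getD_reverse_map_neg l i (by omega)
  have hidx1 : n - 1 - (i+1) = j := by omega
  have hidx0 : n - 1 - i = j + 1 := by omega
  have := mesh_le_gap (p := p.comp (-X)) hi1
  rw [e1, e0, hidx1, hidx0] at this
  calc mesh (p.comp (-X)) ≤ ENNReal.ofReal (-(l.getD j 0) - -(l.getD (j+1) 0)) := this
    _ = ENNReal.ofReal (l.getD (j+1) 0 - l.getD j 0) := by congr 1; ring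

lemma mesh_refl (p : Polynomial ℝ) : mesh (p.comp (-X)) = mesh p := by
  refine le_antisymm (mesh_refl_le p) ?_
  have := mesh_refl_le (p.comp (-X))
  rwa [refl_refl] at this

lemma roots_neg (p : Polynomial ℝ) : (-p).roots = p.roots := by
  by_cases hp : p = 0
  · simp [hp]
  rw [← neg_one_smul ℝ p, roots_smul_nonzero _ (by norm_num : (-1:ℝ) ≠ 0)]

lemma hyperbolic_neg {p : Polynomial ℝ} (hp : Hyperbolic p) : Hyperbolic (-p) := by
  rw [Hyperbolic, roots_neg, natDegree_neg]
  exact hp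

lemma mesh_neg (p : Polynomial ℝ) : mesh (-p) = mesh p := mesh_congr (roots_neg p)


lemma inv_anti_strict {a b : ℝ} (hab : a < b) (h : 0 < a ∨ b < 0) : b⁻¹ < a⁻¹ := by
  have h1 : 0 < a * b := by
    rcases h with ha | hb
    · exact mul_pos ha (lt_trans ha hab)
    · exact mul_pos_of_neg_of_neg (lt_trans hab hb) hb
  have ha : a ≠ 0 := by rintro rfl; simp at h1
  have hb : b ≠ 0 := by rintro rfl; simp at h1
  rw [show a⁻¹ = b * (a * b)⁻¹ by rw [mul_inv, mul_comm a⁻¹, ← mul_assoc, mul_inv_cancel₀ hb, one_mul],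
    show b⁻¹ = a * (a * b)⁻¹ by rw [mul_inv, ← mul_assoc, mul_inv_cancel₀ ha, one_mul]]
  exact mul_lt_mul_of_pos_right hab (inv_pos.2 h1)

lemma key_ineq {m a b : ℝ} (hm : 0 < m) (ha : 0 < a) (hab : a ≤ b) :
    (a + m)⁻¹ - a⁻¹ ≤ (b + m)⁻¹ - b⁻¹ := by
  have hb : 0 < b := lt_of_lt_of_le ha hab
  have e : ∀ u : ℝ, 0 < u → (u + m)⁻¹ - u⁻¹ = -(m / (u * (u + m))) := by
    intro u hu
    have h1 : u ≠ 0 := ne_of_gt hu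
    have h2 : u + m ≠ 0 := by positivity
    rw [inv_sub_inv h2 h1, show u - (u + m) = -m from by ring, neg_div, mul_comm]
  rw [e a ha, e b hb, neg_le_neg_iff]
  apply div_le_div_of_nonneg_left (le_of_lt hm) (by positivity)
  nlinarith

/-- The sum `S(t) = ∑_{j<n} (t - x j)⁻¹`. -/
def Ssum (n : ℕ) (x : ℕ → ℝ) (t : ℝ) : ℝ := ∑ j ∈ Finset.range n, (t - x j)⁻¹

lemma Ssum_strict_anti {n : ℕ} {x : ℕ → ℝ} (hn : 0 < n) {u v : ℝ} (huv : u < v)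
    (h : ∀ j < n, x j < u ∨ v < x j) : Ssum n x v < Ssum n x u := by
  apply Finset.sum_lt_sum_of_nonempty (Finset.nonempty_range_iff.2 (by omega))
  intro j hj
  rw [Finset.mem_range] at hj
  rcases h j hj with hx | hx
  · exact inv_anti_strict (by linarith) (Or.inl (by linarith))
  · exact inv_anti_strict (by linarith) (Or.inr (by linarith))

/-- abstract multi-gap -/
lemma xgap {n : ℕ} {x : ℕ → ℝ} {m : ℝ} (hgap : ∀ j, j + 1 < n → x j + m ≤ x (j + 1))
    {i j : ℕ} (hij : i ≤ j) (hj : j < n) : x i + ((j - i : ℕ) : ℝ) * m ≤ x j := by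
  induction j with
  | zero => interval_cases i; simp
  | succ j ih =>
    rcases Nat.lt_or_ge i (j + 1) with hlt | hge
    · have h1 := ih (by omega) (by omega)
      have h2 := hgap j (by omega)
      have hc : ((j + 1 - i : ℕ) : ℝ) = ((j - i : ℕ) : ℝ) + 1 := by
        rw [Nat.cast_sub (by omega), Nat.cast_sub (by omega)]
        push_cast; ring
      rw [hc]
      linarith
    · have : i = j + 1 := by omega
      subst this; simp

/-- The key telescoping inequality. -/
lemma Ssum_shift {n : ℕ} {x : ℕ → ℝ} {m z : ℝ} (hm : 0 < m) {i : ℕ} (hi : i + 1 < n)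
    (hgap : ∀ j, j + 1 < n → x j + m ≤ x (j + 1))
    (hz1 : x i < z) (hz2 : z < x (i + 1)) (hz3 : x (i + 1) < z + m) :
    Ssum n x z ≤ Ssum n x (z + m) := by
  set a : ℝ := x (i + 1) - z with hadef
  have ha0 : 0 < a := by simp only [hadef]; linarith
  have ham : a < m := by simp only [hadef]; linarith
  set g : ℕ → ℝ := fun j => (z + m - x j)⁻¹ - (z - x j)⁻¹ with hg
  have hsplit : Ssum n x (z + m) - Ssum n x z = ∑ j ∈ Finset.range n, g j := by
    rw [Ssum, Ssum, ← Finset.sum_sub_distrib]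
  rw [← sub_nonneg, hsplit]
  have hsum : ∑ j ∈ Finset.range n, g j
      = ((∑ j ∈ Finset.range (i + 1), g j) + g (i + 1)) + ∑ j ∈ Finset.Ico (i + 2) n, g j := by
    rw [Finset.range_eq_Ico,
      ← Finset.sum_Ico_consecutive g (Nat.zero_le (i + 2)) (by omega : i + 2 ≤ n),
      ← Finset.range_eq_Ico, Finset.sum_range_succ]
  -- Part A : j ≤ i
  have hA : -((m - a)⁻¹) + (((i + 2 : ℕ) : ℝ) * m - a)⁻¹ ≤ ∑ j ∈ Finset.range (i + 1), g j := by
    set F : ℕ → ℝ := fun j => -((((i + 2 - j : ℕ) : ℝ) * m - a)⁻¹) with hF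
    have hFsum : ∑ j ∈ Finset.range (i + 1), (F (j + 1) - F j) = F (i + 1) - F 0 :=
      Finset.sum_range_sub F (i + 1)
    have hterm : ∀ j ∈ Finset.range (i + 1), F (j + 1) - F j ≤ g j := by
      intro j hj
      rw [Finset.mem_range] at hj
      have hk1 : (1 : ℝ) ≤ ((i + 1 - j : ℕ) : ℝ) := by
        have h' : 1 ≤ i + 1 - j := by omega
        exact_mod_cast h'
      set w : ℝ := ((i + 1 - j : ℕ) : ℝ) * m - a with hw
      have hw0 : 0 < w := by nlinarith
      have hxj : x j + ((i + 1 - j : ℕ) : ℝ) * m ≤ x (i + 1) :=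
        xgap hgap (by omega : j ≤ i + 1) (by omega : i + 1 < n)
      have huj : w ≤ z - x j := by
        have hz' : x (i + 1) = z + a := by simp only [hadef]; ring
        rw [hz'] at hxj
        simp only [hw]
        linarith
      have hgj : g j = ((z - x j) + m)⁻¹ - (z - x j)⁻¹ := by
        simp only [hg]
        rw [show z + m - x j = (z - x j) + m from by ring]
      have hFj : F (j + 1) - F j = (w + m)⁻¹ - w⁻¹ := by
        simp only [hF, hw]
        have e1 : ((i + 2 - (j + 1) : ℕ) : ℝ) = ((i + 1 - j : ℕ) : ℝ) := by
          congr 1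
          omega
        have e2 : ((i + 2 - j : ℕ) : ℝ) = ((i + 1 - j : ℕ) : ℝ) + 1 := by
          rw [Nat.cast_sub (by omega), Nat.cast_sub (by omega)]
          push_cast; ring
        rw [e1, e2]
        ring_nf
      rw [hgj, hFj]
      exact key_ineq hm hw0 huj
    have hsle := Finset.sum_le_sum hterm
    rw [hFsum] at hsle
    have hF0 : F 0 = -((((i + 2 : ℕ) : ℝ) * m - a)⁻¹) := by simp only [hF, Nat.sub_zero]
    have hFi : F (i + 1) = -((m - a)⁻¹) := by
      simp only [hF]
      rw [show i + 2 - (i + 1) = 1 from by omega]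
      norm_num
    rw [hF0, hFi] at hsle
    linarith
  -- term at i + 1
  have hB : g (i + 1) = (m - a)⁻¹ + a⁻¹ := by
    simp only [hg]
    rw [show z + m - x (i + 1) = m - a from by simp only [hadef]; ring,
      show z - x (i + 1) = -a from by simp only [hadef]; ring, inv_neg]
    ring
  -- Part C : j ≥ i + 2
  set K := n - (i + 2) with hK
  have hC : (a + (K : ℝ) * m)⁻¹ - a⁻¹ ≤ ∑ j ∈ Finset.Ico (i + 2) n, g j := by
    rw [Finset.sum_Ico_eq_sum_range, ← hK]
    set H : ℕ → ℝ := fun k => (a + (k : ℝ) * m)⁻¹ with hH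
    have hHsum : ∑ k ∈ Finset.range K, (H (k + 1) - H k) = H K - H 0 :=
      Finset.sum_range_sub H K
    have hterm : ∀ k ∈ Finset.range K, H (k + 1) - H k ≤ g (i + 2 + k) := by
      intro k hk
      rw [Finset.mem_range] at hk
      have hjn : i + 2 + k < n := by omega
      have hxj : x (i + 1) + ((i + 2 + k - (i + 1) : ℕ) : ℝ) * m ≤ x (i + 2 + k) :=
        xgap hgap (by omega) hjn
      have hkj : ((i + 2 + k - (i + 1) : ℕ) : ℝ) = (k : ℝ) + 1 := by
        rw [show i + 2 + k - (i + 1) = k + 1 from by omega]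
        push_cast; ring
      rw [hkj, show x (i + 1) = z + a from by simp only [hadef]; ring] at hxj
      set v : ℝ := x (i + 2 + k) - z - m with hv
      have hv0 : a + (k : ℝ) * m ≤ v := by simp only [hv]; linarith
      have hvpos : 0 < a + (k : ℝ) * m := by positivity
      have hgj : g (i + 2 + k) = (v + m)⁻¹ - v⁻¹ := by
        simp only [hg]
        rw [show z + m - x (i + 2 + k) = -v from by simp only [hv]; ring,
          show z - x (i + 2 + k) = -(v + m) from by simp only [hv]; ring, inv_neg, inv_neg]
        ring
      have hHk : H (k + 1) - H k = ((a + (k : ℝ) * m) + m)⁻¹ - (a + (k : ℝ) * m)⁻¹ := by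
        simp only [hH]
        push_cast
        ring_nf
      rw [hgj, hHk]
      exact key_ineq hm hvpos hv0
    have hsle := Finset.sum_le_sum hterm
    rw [hHsum] at hsle
    have hH0 : H 0 = a⁻¹ := by simp [hH]
    rw [hH0] at hsle
    exact hsle
  have hpos1 : 0 < ((i + 2 : ℕ) : ℝ) * m - a := by
    have : (2 : ℝ) ≤ ((i + 2 : ℕ) : ℝ) := by exact_mod_cast (by omega : 2 ≤ i + 2)
    nlinarith
  have hpos2 : 0 < a + (K : ℝ) * m := by positivity
  have hiv1 : 0 < (((i + 2 : ℕ) : ℝ) * m - a)⁻¹ := inv_pos.2 hpos1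
  have hiv2 : 0 < (a + (K : ℝ) * m)⁻¹ := inv_pos.2 hpos2
  rw [hsum, hB]
  linarith

/-! ### product formula and the logarithmic derivative -/

lemma list_prod_getD {M : Type*} [CommMonoid M] (l : List M) :
    l.prod = ∏ i ∈ Finset.range l.length, l.getD i 1 := by
  induction l with
  | nil => simp
  | cons a t ih =>
    rw [List.prod_cons, List.length_cons, Finset.prod_range_succ']
    simp only [List.getD_cons_succ, List.getD_cons_zero]
    rw [← ih]
    exact (mul_comm _ _)

lemma prod_form {p : Polynomial ℝ} (hp : Hyperbolic p) (h0 : p ≠ 0) :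
    p = C p.leadingCoeff *
      ∏ i ∈ Finset.range (sortedRoots p).length, (X - C ((sortedRoots p).getD i 0)) := by
  have hsplit : p.Splits := (splits_iff_card_roots).2 hp
  have hfact := hsplit.eq_prod_roots
  rw [← sortedRoots_coe p, Multiset.map_coe, Multiset.prod_coe] at hfact
  have hlist : (List.map (fun a => X - C a) (sortedRoots p)).prod
      = ∏ i ∈ Finset.range (sortedRoots p).length, (X - C ((sortedRoots p).getD i 0)) := by
    rw [list_prod_getD, List.length_map]
    apply Finset.prod_congr rfl
    intro i hi
    rw [Finset.mem_range] at hi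
    rw [List.getD_eq_getElem _ _ (by simpa using hi), List.getElem_map,
      List.getD_eq_getElem _ _ hi]
  conv_lhs => rw [hfact]
  rw [hlist]

lemma eval_form {p : Polynomial ℝ} (hp : Hyperbolic p) (h0 : p ≠ 0) (t : ℝ) :
    p.eval t = p.leadingCoeff *
      ∏ i ∈ Finset.range (sortedRoots p).length, (t - (sortedRoots p).getD i 0) := by
  conv_lhs => rw [prod_form hp h0]
  rw [eval_mul, eval_C, eval_prod]
  simp

lemma deriv_eval_form {p : Polynomial ℝ} (hp : Hyperbolic p) (h0 : p ≠ 0) (t : ℝ) :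
    (derivative p).eval t = p.leadingCoeff *
      ∑ i ∈ Finset.range (sortedRoots p).length,
        ∏ j ∈ (Finset.range (sortedRoots p).length).erase i, (t - (sortedRoots p).getD j 0) := by
  conv_lhs => rw [prod_form hp h0]
  rw [derivative_C_mul]
  have hd : derivative (∏ i ∈ Finset.range (sortedRoots p).length,
        (X - C ((sortedRoots p).getD i 0)))
      = ∑ i ∈ Finset.range (sortedRoots p).length,
        (∏ j ∈ (Finset.range (sortedRoots p).length).erase i,
          (X - C ((sortedRoots p).getD j 0))) * derivative (X - C ((sortedRoots p).getD i 0)) :=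
    derivative_prod
  rw [hd, eval_mul, eval_C, eval_finset_sum]
  congr 1
  apply Finset.sum_congr rfl
  intro i _
  rw [eval_mul, eval_prod]
  simp

lemma deriv_eval_eq {p : Polynomial ℝ} (hp : Hyperbolic p) (h0 : p ≠ 0) {t : ℝ}
    (ht : p.eval t ≠ 0) :
    (derivative p).eval t
      = p.eval t * Ssum (sortedRoots p).length (fun i => (sortedRoots p).getD i 0) t := by
  have hfac : ∀ i ∈ Finset.range (sortedRoots p).length, t - (sortedRoots p).getD i 0 ≠ 0 := by
    intro i hi
    rw [eval_form hp h0 t] at ht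
    exact Finset.prod_ne_zero_iff.1 (right_ne_zero_of_mul ht) i hi
  rw [deriv_eval_form hp h0 t, eval_form hp h0 t, Ssum, mul_assoc]
  congr 1
  rw [Finset.mul_sum]
  apply Finset.sum_congr rfl
  intro j hj
  rw [← Finset.prod_erase_mul _ _ hj, mul_assoc, mul_inv_cancel₀ (hfac j hj), mul_one]

lemma root_S_eq {r : ℝ} {p : Polynomial ℝ} (hp : Hyperbolic p) (h0 : p ≠ 0) {z : ℝ}
    (hz : (derivative p - C r * p).eval z = 0) (hpz : p.eval z ≠ 0) :
    Ssum (sortedRoots p).length (fun i => (sortedRoots p).getD i 0) z = r := by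
  rw [eval_sub, eval_mul, eval_C, sub_eq_zero] at hz
  have := deriv_eval_eq hp h0 hpz
  rw [hz] at this
  exact mul_left_cancel₀ hpz (by linarith [this])

/-! ### pairwise criterion for the mesh -/

lemma mesh_ge_of_pairwise {q : Polynomial ℝ} {m : ℝ} (hnd : q.roots.Nodup)
    (h : ∀ w ∈ q.roots, ∀ w' ∈ q.roots, w < w' → w + m ≤ w') :
    ENNReal.ofReal m ≤ mesh q := by
  apply ofReal_le_mesh
  intro i hi
  have hi' : i < (sortedRoots q).length := by omega
  have ha : (sortedRoots q).getD i 0 ∈ q.roots := sortedRoots_getD_mem hi'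
  have hb : (sortedRoots q).getD (i + 1) 0 ∈ q.roots := sortedRoots_getD_mem hi
  have hab : (sortedRoots q).getD i 0 ≤ (sortedRoots q).getD (i + 1) 0 :=
    sortedRoots_le (by omega) hi
  have hlnd : (sortedRoots q).Nodup := by
    rw [← Multiset.coe_nodup, sortedRoots_coe]
    exact hnd
  have hne : (sortedRoots q).getD i 0 ≠ (sortedRoots q).getD (i + 1) 0 := by
    rw [List.getD_eq_getElem _ _ hi', List.getD_eq_getElem _ _ hi]
    intro he
    have := (hlnd.getElem_inj_iff).1 he
    omega
  have := h _ ha _ hb (lt_of_le_of_ne hab hne)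
  linarith

/-! ### the mesh step -/

lemma mesh_step_nonneg {r : ℝ} (hr : 0 ≤ r) {p : Polynomial ℝ} (hp : Hyperbolic p) :
    mesh p ≤ mesh (derivative p - C r * p) := by
  by_cases h0 : p = 0
  · subst h0
    simp only [derivative_zero, mul_zero, sub_zero]
    exact le_refl _
  set q : Polynomial ℝ := derivative p - C r * p with hqdef
  set n : ℕ := p.natDegree with hn
  have hcard : Multiset.card p.roots = n := hp
  by_cases hn1 : n ≤ 1
  · have hqdeg : q.natDegree ≤ 1 := by
      refine le_trans (natDegree_sub_le _ _) ?_
      refine max_le ?_ ?_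
      · exact le_trans (natDegree_derivative_le p) (by omega)
      · exact le_trans (natDegree_C_mul_le r p) (by omega)
    have : Multiset.card q.roots ≤ 1 := le_trans (card_roots' q) hqdeg
    rw [mesh_eq_top this]
    exact le_top
  push_neg at hn1
  by_cases hm0 : mesh p = 0
  · rw [hm0]; exact zero_le
  have hlen : (sortedRoots p).length = n := by rw [length_sortedRoots, hcard]
  have hmesh_ne_top : mesh p ≠ ⊤ := by
    intro htop
    have h01 : 0 + 1 < (sortedRoots p).length := by omega
    have := mesh_le_gap h01
    rw [htop, top_le_iff] at this
    exact ENNReal.ofReal_ne_top this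
  set m : ℝ := (mesh p).toReal with hm
  have hmofReal : ENNReal.ofReal m = mesh p := ENNReal.ofReal_toReal hmesh_ne_top
  have hmpos : 0 < m := ENNReal.toReal_pos hm0 hmesh_ne_top
  set x : ℕ → ℝ := fun i => (sortedRoots p).getD i 0 with hx
  have hgap : ∀ j, j + 1 < n → x j + m ≤ x (j + 1) := by
    intro j hj
    exact gap_ge (le_of_eq hmofReal) (by omega)
  have hxmono : ∀ i j, i ≤ j → j < n → x i ≤ x j := by
    intro i j hij hj
    exact sortedRoots_le hij (by omega)
  have hxroot : ∀ i, i < n → p.eval (x i) = 0 := by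
    intro i hi
    exact (mem_roots h0).1 (sortedRoots_getD_mem (by omega))
  have hrootx : ∀ w ∈ p.roots, ∃ j, j < n ∧ x j = w := by
    intro w hw
    obtain ⟨j, hj, hjw⟩ := exists_index_of_root hw
    exact ⟨j, by omega, hjw⟩
  -- q's degree/count data, by cases on r
  have hKdata : ∃ K : ℕ, K ≤ n ∧ Multiset.card q.roots = K ∧ q ≠ 0 ∧
      (∀ i, i < K → ∃ w, x i < w ∧ (i + 1 < n → w < x (i + 1)) ∧ q.eval w = 0) := by
    rcases eq_or_lt_of_le hr with rfl | hrpos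
    · -- r = 0 : q = derivative p
      have hq0 : q = derivative p := by rw [hqdef]; simp
      have hhyp : Hyperbolic (derivative p) := hyperbolic_deriv hp
      have hdeg : (derivative p).natDegree = n - 1 :=
        natDegree_eq_of_degree_eq_some (degree_derivative_eq p (by omega))
      have hqne : q ≠ 0 := by
        rw [hq0]
        intro he
        rw [he] at hdeg
        rw [natDegree_zero] at hdeg
        omega
      refine ⟨n - 1, by omega, ?_, hqne, ?_⟩
      · rw [hq0, hhyp, hdeg]
      · intro i hi
        have hi1 : i + 1 < n := by omega
        have hxgap : x i < x (i + 1) := by have := hgap i hi1; linarith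
        obtain ⟨w, hw, hweval⟩ := rolle_between (r := 0) hxgap (hxroot i (by omega))
          (hxroot (i + 1) hi1)
        exact ⟨w, hw.1, fun _ => hw.2, hweval⟩
    · -- r > 0
      have hhyp : Hyperbolic q := hyperbolic_step_pos hrpos hp
      have hqne : q ≠ 0 := step_ne_zero (ne_of_gt hrpos) h0
      have hdeg : q.natDegree = n := step_natDegree (ne_of_gt hrpos) h0
      refine ⟨n, le_refl n, by rw [hhyp, hdeg], hqne, ?_⟩
      intro i hi
      by_cases hi1 : i + 1 < n
      · have hxgap : x i < x (i + 1) := by have := hgap i hi1; linarith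
        obtain ⟨w, hw, hweval⟩ := rolle_between (r := r) hxgap (hxroot i (by omega))
          (hxroot (i + 1) hi1)
        exact ⟨w, hw.1, fun _ => hw.2, hweval⟩
      · -- i = n - 1 : outer root
        obtain ⟨w, hw, hweval⟩ := exists_root_gt hrpos h0 (hxroot i hi)
        exact ⟨w, hw, fun h => absurd h hi1, hweval⟩
  obtain ⟨K, hKn, hqcard, hqne, hzex⟩ := hKdata
  classical
  set zf : ℕ → ℝ := fun i => if h : i < K then (hzex i h).choose else 0 with hzf
  have hzlo : ∀ i, i < K → x i < zf i := by
    intro i hi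
    rw [hzf]
    simp only [dif_pos hi]
    exact (hzex i hi).choose_spec.1
  have hzhi : ∀ i, i < K → i + 1 < n → zf i < x (i + 1) := by
    intro i hi hi1
    rw [hzf]
    simp only [dif_pos hi]
    exact (hzex i hi).choose_spec.2.1 hi1
  have hzroot : ∀ i, i < K → q.eval (zf i) = 0 := by
    intro i hi
    rw [hzf]
    simp only [dif_pos hi]
    exact (hzex i hi).choose_spec.2.2
  have hzmono : ∀ i j, i < j → j < K → zf i < zf j := by
    intro i j hij hj
    have hi : i < K := by omega
    have hi1n : i + 1 < n := by omega
    calc zf i < x (i + 1) := hzhi i hi hi1n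
      _ ≤ x j := hxmono _ _ (by omega) (by omega)
      _ < zf j := hzlo j hj
  have hpz : ∀ i, i < K → p.eval (zf i) ≠ 0 := by
    intro i hi hcontra
    obtain ⟨j, hjn, hjw⟩ := hrootx (zf i) ((mem_roots h0).2 hcontra)
    rcases Nat.lt_or_ge j (i + 1) with hji | hji
    · have : x j ≤ x i := hxmono _ _ (by omega) (by omega)
      have := hzlo i hi
      linarith [hjw ▸ this]
    · have hi1n : i + 1 < n := by omega
      have h1 : zf i < x (i + 1) := hzhi i hi hi1n
      have h2 : x (i + 1) ≤ x j := hxmono _ _ (by omega) (by omega)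
      rw [hjw] at h2
      linarith
  -- identify the roots of q
  have hinjOn : Set.InjOn zf (Finset.range K) := by
    intro i hi j hj hij
    simp only [Finset.coe_range, Set.mem_Iio] at hi hj
    by_contra hne
    rcases Nat.lt_or_ge i j with h' | h'
    · exact absurd hij (ne_of_lt (hzmono i j h' hj))
    · have : j < i := by omega
      exact absurd hij.symm (ne_of_lt (hzmono j i this hi))
  have himgcard : ((Finset.range K).image zf).card = K := by
    rw [Finset.card_image_of_injOn hinjOn, Finset.card_range]
  have hsub : ((Finset.range K).image zf).val ≤ q.roots := by
    rw [Multiset.le_iff_subset (Finset.nodup _)]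
    intro w hw
    rw [Finset.mem_val, Finset.mem_image] at hw
    obtain ⟨i, hi, rfl⟩ := hw
    rw [Finset.mem_range] at hi
    exact (mem_roots hqne).2 (hzroot i hi)
  have hroots_eq : q.roots = ((Finset.range K).image zf).val := by
    refine (Multiset.eq_of_le_of_card_le hsub ?_).symm
    rw [hqcard]
    change K ≤ ((Finset.range K).image zf).card
    rw [himgcard]
  have hqnodup : q.roots.Nodup := by
    rw [hroots_eq]
    exact Finset.nodup _
  -- pairwise gap
  have hpair : ∀ w ∈ q.roots, ∀ w' ∈ q.roots, w < w' → w + m ≤ w' := by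
    intro w hw w' hw' hww
    rw [hroots_eq, Finset.mem_val, Finset.mem_image] at hw hw'
    obtain ⟨i, hi, rfl⟩ := hw
    obtain ⟨j, hj, rfl⟩ := hw'
    rw [Finset.mem_range] at hi hj
    have hij : i < j := by
      rcases Nat.lt_trichotomy i j with h' | h' | h'
      · exact h'
      · subst h'; exact absurd hww (lt_irrefl _)
      · exact absurd (hzmono j i h' hi) (not_lt.2 (le_of_lt hww))
    rcases Nat.lt_or_ge (i + 1) j with hj2 | hj2
    · -- j ≥ i + 2
      have hi1n : i + 1 < n := by omega
      have hi2n : i + 2 ≤ n - 1 := by omega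
      have h1 : zf i < x (i + 1) := hzhi i (by omega) hi1n
      have h2 : x (i + 1) + m ≤ x (i + 2) := hgap (i + 1) (by omega)
      have h3 : x (i + 2) ≤ x j := hxmono _ _ (by omega) (by omega)
      have h4 : x j < zf j := hzlo j hj
      linarith
    · -- j = i + 1
      have hji : j = i + 1 := by omega
      subst hji
      by_cases hcase : zf i + m ≤ x (i + 1)
      · have := hzlo (i + 1) hj
        linarith
      push_neg at hcase
      have hi1n : i + 1 < n := by omega
      have hSi : Ssum n x (zf i) = r := by
        have := root_S_eq hp h0 (hzroot i (by omega)) (hpz i (by omega))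
        rwa [hlen] at this
      have hSj : Ssum n x (zf (i + 1)) = r := by
        have := root_S_eq hp h0 (hzroot (i + 1) hj) (hpz (i + 1) hj)
        rwa [hlen] at this
      have hshift : Ssum n x (zf i) ≤ Ssum n x (zf i + m) :=
        Ssum_shift hmpos hi1n hgap (hzlo i (by omega)) (hzhi i (by omega) hi1n) hcase
      by_contra hlt
      push_neg at hlt
      have hanti : Ssum n x (zf i + m) < Ssum n x (zf (i + 1)) := by
        apply Ssum_strict_anti (by omega) hlt
        intro j0 hj0
        rcases Nat.lt_or_ge j0 (i + 2) with hj0' | hj0'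
        · left
          calc x j0 ≤ x (i + 1) := hxmono _ _ (by omega) hi1n
            _ < zf (i + 1) := hzlo (i + 1) hj
        · right
          have h1 : x (i + 1) + m ≤ x (i + 2) := hgap (i + 1) (by omega)
          have h2 : x (i + 2) ≤ x j0 := hxmono _ _ (by omega) (by omega)
          have h3 : zf i < x (i + 1) := hzhi i (by omega) hi1n
          linarith
      rw [hSi, hSj] at *
      linarith
  calc mesh p = ENNReal.ofReal m := hmofReal.symm
    _ ≤ mesh q := mesh_ge_of_pairwise hqnodup hpair

/-- The full Hermite–Poulain step for a single factor `D - r`. -/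
lemma step (r : ℝ) {p : Polynomial ℝ} (hp : Hyperbolic p) :
    Hyperbolic (derivative p - C r * p) ∧ mesh p ≤ mesh (derivative p - C r * p) := by
  rcases le_or_gt 0 r with hr | hr
  · constructor
    · rcases eq_or_lt_of_le hr with rfl | hrpos
      · have : derivative p - C (0:ℝ) * p = derivative p := by simp
        rw [this]
        exact hyperbolic_deriv hp
      · exact hyperbolic_step_pos hrpos hp
    · exact mesh_step_nonneg hr hp
  · -- r < 0 : reflect
    set u : Polynomial ℝ := p.comp (-X) with hu
    have hup : Hyperbolic u := hyperbolic_refl hp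
    have h1 : Hyperbolic (derivative u - C (-r) * u) := hyperbolic_step_pos (by linarith) hup
    have h2 : mesh u ≤ mesh (derivative u - C (-r) * u) := mesh_step_nonneg (by linarith) hup
    have key : derivative u - C (-r) * u = -((derivative p - C r * p).comp (-X)) := by
      rw [hu, derivative_comp, sub_comp, mul_comp, C_comp, C_neg]
      simp only [derivative_neg, derivative_X]
      ring
    have hid : derivative p - C r * p = -((derivative u - C (-r) * u).comp (-X)) := by
      rw [key]
      rw [neg_comp, neg_neg, refl_refl]
    constructor
    · rw [hid]
      exact hyperbolic_neg (hyperbolic_refl h1)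
    · rw [hid, mesh_neg, mesh_refl]
      calc mesh p = mesh u := (mesh_refl p).symm
        _ ≤ _ := h2

/-! ### assembling the operator -/

def Dlin : Module.End ℝ (Polynomial ℝ) := Polynomial.derivative

lemma aeval_step (t : ℝ) (p : Polynomial ℝ) :
    (Polynomial.aeval Dlin (X - C t)) p = derivative p - C t * p := by
  rw [map_sub, aeval_X, aeval_C]
  rw [LinearMap.sub_apply]
  rw [Module.algebraMap_end_apply]
  rw [Polynomial.smul_eq_C_mul]
  rfl

lemma multiset_step (s : Multiset ℝ) :
    ∀ p : Polynomial ℝ, Hyperbolic p →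
      Hyperbolic ((Polynomial.aeval Dlin ((s.map (fun t => X - C t)).prod)) p) ∧
      mesh p ≤ mesh ((Polynomial.aeval Dlin ((s.map (fun t => X - C t)).prod)) p) := by
  induction s using Multiset.induction_on with
  | empty =>
    intro p hp
    simp only [Multiset.map_zero, Multiset.prod_zero, map_one, Module.End.one_apply]
    exact ⟨hp, le_refl _⟩
  | cons t s ih =>
    intro p hp
    rw [Multiset.map_cons, Multiset.prod_cons, map_mul]
    obtain ⟨h1, h2⟩ := ih p hp
    set u : Polynomial ℝ := (Polynomial.aeval Dlin ((s.map (fun t => X - C t)).prod)) p with hu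
    have happ : (Polynomial.aeval Dlin (X - C t) * Polynomial.aeval Dlin
        ((s.map (fun t => X - C t)).prod)) p = (Polynomial.aeval Dlin (X - C t)) u := rfl
    rw [happ, aeval_step]
    obtain ⟨h3, h4⟩ := step t h1
    exact ⟨h3, le_trans h2 h4⟩

lemma hyperbolic_smul {c : ℝ} (hc : c ≠ 0) {p : Polynomial ℝ} (hp : Hyperbolic p) :
    Hyperbolic (c • p) := by
  by_cases h0 : p = 0
  · simp [h0, hyperbolic_zero]
  rw [Hyperbolic, roots_smul_nonzero _ hc, Polynomial.smul_eq_C_mul,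
    natDegree_eq_of_degree_eq (degree_C_mul hc : (C c * p).degree = p.degree)]
  exact hp

lemma mesh_smul {c : ℝ} (hc : c ≠ 0) (p : Polynomial ℝ) : mesh (c • p) = mesh p :=
  mesh_congr (roots_smul_nonzero _ hc)

lemma aeval_sum_eq (k : ℕ) (a : ℕ → ℝ) (p : Polynomial ℝ) :
    (∑ j ∈ Finset.range (k + 1),
        C (a j) * (fun q : Polynomial ℝ => Polynomial.derivative q)^[j] p)
      = (Polynomial.aeval Dlin
          (∑ j ∈ Finset.range (k + 1), C (a j) * X ^ j)) p := by
  rw [map_sum, LinearMap.sum_apply]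
  apply Finset.sum_congr rfl
  intro j _
  rw [map_mul, aeval_C, map_pow, aeval_X]
  have : (algebraMap ℝ (Module.End ℝ (Polynomial ℝ)) (a j) * Dlin ^ j) p
      = a j • ((Dlin ^ j) p) := by
    rw [Module.End.mul_apply, Module.algebraMap_end_apply]
  rw [this, Polynomial.smul_eq_C_mul]
  congr 1
  rw [Module.End.pow_apply]
  rfl

lemma main (k : ℕ) (a : ℕ → ℝ)
    (hQ : Hyperbolic (∑ j ∈ Finset.range (k + 1), C (a j) * X ^ j))
    (p : Polynomial ℝ) (hp : Hyperbolic p) :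
    Hyperbolic (∑ j ∈ Finset.range (k + 1),
      C (a j) * (fun q : Polynomial ℝ => Polynomial.derivative q)^[j] p) ∧
    mesh p ≤ mesh (∑ j ∈ Finset.range (k + 1),
      C (a j) * (fun q : Polynomial ℝ => Polynomial.derivative q)^[j] p) := by
  rw [aeval_sum_eq]
  set Q : Polynomial ℝ := ∑ j ∈ Finset.range (k + 1), C (a j) * X ^ j with hQdef
  by_cases hQ0 : Q = 0
  · rw [hQ0]
    simp only [map_zero, LinearMap.zero_apply]
    refine ⟨hyperbolic_zero, ?_⟩
    rw [mesh_eq_top (by simp : Multiset.card (0 : Polynomial ℝ).roots ≤ 1)]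
    exact le_top
  have hsplit : Q.Splits := (splits_iff_card_roots).2 hQ
  have hfact := hsplit.eq_prod_roots
  have hlc : Q.leadingCoeff ≠ 0 := leadingCoeff_ne_zero.2 hQ0
  have haeval : Polynomial.aeval Dlin Q
      = algebraMap ℝ (Module.End ℝ (Polynomial ℝ)) Q.leadingCoeff *
        Polynomial.aeval Dlin ((Q.roots.map (fun t => X - C t)).prod) := by
    conv_lhs => rw [hfact]
    rw [map_mul, aeval_C]
  have happly : (Polynomial.aeval Dlin Q) p
      = Q.leadingCoeff • ((Polynomial.aeval Dlin ((Q.roots.map (fun t => X - C t)).prod)) p) := by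
    rw [haeval, Module.End.mul_apply, Module.algebraMap_end_apply]
  obtain ⟨h1, h2⟩ := multiset_step Q.roots p hp
  rw [happly]
  exact ⟨hyperbolic_smul hlc h1, by rwa [mesh_smul hlc]⟩

end HP

end HPproof

/-- If the symbol polynomial `Q(t) = a₀ + a₁ t + ⋯ + a_k t^k` is hyperbolic, then the
differential operator `T = a₀ + a₁ d/dx + ⋯ + a_k (d/dx)^k` sends every hyperbolic
polynomial `p` to a hyperbolic polynomial, and `M(T(p)) ≥ M(p)`. -/
theorem stmt_1 (k : ℕ) (a : ℕ → ℝ)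
    (hQ : Hyperbolic (∑ j ∈ Finset.range (k + 1), Polynomial.C (a j) * Polynomial.X ^ j))
    (p : Polynomial ℝ) (hp : Hyperbolic p) :
    Hyperbolic (∑ j ∈ Finset.range (k + 1),
      Polynomial.C (a j) * (fun q : Polynomial ℝ => Polynomial.derivative q)^[j] p) ∧
    mesh p ≤ mesh (∑ j ∈ Finset.range (k + 1),
      Polynomial.C (a j) * (fun q : Polynomial ℝ => Polynomial.derivative q)^[j] p) := by
  exact HP.main k a hQ p hp

end
end

section
/- Let p be a real polynomial of degree k ≥ 2 all of whose roots are real and of the same sign (all nonzero roots either all positive or all negative), and let λ > 0. Then the polynomial T(p) = λp + x·p' has all real roots of the same sign and lmesh(λp + xp') ≥ lmesh(p). -/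
open Polynomial
open scoped ENNReal

noncomputable section

namespace LmeshAux


variable (lam : ℝ)

/-- The operator `T p = λ p + x p'`. -/
def T (p : Polynomial ℝ) : Polynomial ℝ := Polynomial.C lam * p + Polynomial.X * Polynomial.derivative p

lemma coeff_T (p : Polynomial ℝ) (n : ℕ) : (T lam p).coeff n = (lam + n) * p.coeff n := by
  rcases n with _ | n
  · simp [T, coeff_X_mul]  -- coeff 0
  · simp only [T, coeff_add, coeff_C_mul, coeff_X_mul, coeff_derivative]
    push_cast
    ring

lemma eval_T (p : Polynomial ℝ) (x : ℝ) :
    (T lam p).eval x = lam * p.eval x + x * (Polynomial.derivative p).eval x := by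
  simp [T]

lemma natDegree_T (p : Polynomial ℝ) (hp : p ≠ 0) (hlam : 0 < lam) :
    (T lam p).natDegree = p.natDegree ∧ T lam p ≠ 0 := by
  have hco : (T lam p).coeff p.natDegree ≠ 0 := by
    rw [coeff_T]
    exact mul_ne_zero (by positivity) (leadingCoeff_ne_zero.2 hp)
  have hne : T lam p ≠ 0 := fun h => hco (by simp [h])
  constructor
  · apply le_antisymm
    · apply natDegree_le_iff_coeff_eq_zero.2
      intro n hn
      rw [coeff_T, coeff_eq_zero_of_natDegree_lt hn, mul_zero]
    · exact le_natDegree_of_ne_zero hco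
  · exact hne



lemma continuous_rpow_const {lam : ℝ} (hlam : 0 < lam) :
    Continuous fun x : ℝ => x ^ lam := by
  rw [continuous_iff_continuousAt]
  intro x
  exact Real.continuousAt_rpow_const x lam (Or.inr hlam.le)

lemma rolle_T (lam : ℝ) (hlam : 0 < lam) (p : Polynomial ℝ) {a b : ℝ}
    (ha0 : 0 ≤ a) (hab : a < b) (ha : a = 0 ∨ p.eval a = 0) (hb : p.eval b = 0) :
    ∃ c ∈ Set.Ioo a b, (Polynomial.C lam * p + Polynomial.X * Polynomial.derivative p).eval c = 0 := by
  set F : ℝ → ℝ := fun x => x ^ lam * p.eval x with hF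
  have hcont : ContinuousOn F (Set.Icc a b) :=
    ((continuous_rpow_const hlam).mul p.continuous_aeval).continuousOn
  have hFa : F a = 0 := by
    rcases ha with h | h
    · simp [hF, h, Real.zero_rpow hlam.ne']
    · simp [hF, h]
  have hFb : F b = 0 := by simp [hF, hb]
  have hderiv : ∀ x ∈ Set.Ioo a b, HasDerivAt F
      (x ^ (lam - 1) * (lam * p.eval x + x * (Polynomial.derivative p).eval x)) x := by
    intro x hx
    have hx0 : 0 < x := lt_of_le_of_lt ha0 hx.1
    have h1 : HasDerivAt (fun x : ℝ => x ^ lam) (lam * x ^ (lam - 1)) x :=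
      Real.hasDerivAt_rpow_const (Or.inl hx0.ne')
    have h2 : HasDerivAt (fun x : ℝ => p.eval x) ((Polynomial.derivative p).eval x) x :=
      p.hasDerivAt x
    have := h1.mul h2
    refine this.congr_deriv ?_
    have hxpow : x ^ lam = x ^ (lam - 1) * x := by
      rw [show lam = lam - 1 + 1 by ring, Real.rpow_add hx0, Real.rpow_one,
        show lam - 1 + 1 - 1 = lam - 1 by ring]
    rw [hxpow]
    ring
  obtain ⟨c, hc, hc0⟩ := exists_hasDerivAt_eq_zero hab hcont (hFa.trans hFb.symm) hderiv
  refine ⟨c, hc, ?_⟩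
  have hcpos : 0 < c := lt_of_le_of_lt ha0 hc.1
  have hpow : (0:ℝ) < c ^ (lam - 1) := Real.rpow_pos_of_pos hcpos _
  have := mul_eq_zero.1 hc0
  rcases this with h | h
  · exact absurd h hpow.ne'
  · simp only [eval_add, eval_mul, eval_C, eval_X]
    linarith [h]



lemma mult_T (lam : ℝ) (p : Polynomial ℝ) (hp : p ≠ 0) {r : ℝ} (hr0 : r ≠ 0)
    (hr : p.IsRoot r) :
    (Polynomial.C lam * p + Polynomial.X * Polynomial.derivative p).rootMultiplicity r
      = p.rootMultiplicity r - 1 := by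
  set μ := p.rootMultiplicity r with hμ
  have hμpos : 0 < μ := (rootMultiplicity_pos hp).2 hr
  set u := p /ₘ (X - C r) ^ μ with hu
  have hpu : p = (X - C r) ^ μ * u :=
    (pow_mul_divByMonic_rootMultiplicity_eq p r).symm
  have hur : u.eval r ≠ 0 := eval_divByMonic_pow_rootMultiplicity_ne_zero r hp
  set v := Polynomial.C lam * (X - C r) * u
      + X * (Polynomial.C (μ : ℝ) * u + (X - C r) * Polynomial.derivative u) with hv
  have hfac : Polynomial.C lam * p + Polynomial.X * Polynomial.derivative p
      = (X - C r) ^ (μ - 1) * v := by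
    have hder : Polynomial.derivative p
        = Polynomial.C (μ : ℝ) * (X - C r) ^ (μ - 1) * u + (X - C r) ^ μ * Polynomial.derivative u := by
      conv_lhs => rw [hpu]
      rw [derivative_mul, derivative_pow]
      simp only [derivative_sub, derivative_X, derivative_C, sub_zero, mul_one]
    have hpow : (X - C r) ^ μ = (X - C r) ^ (μ - 1) * (X - C r) := by
      rw [← pow_succ, Nat.sub_add_cancel hμpos]
    rw [hder, hpu, hpow, hv]
    ring
  have hvr : v.eval r ≠ 0 := by
    have : v.eval r = r * ((μ : ℝ) * u.eval r) := by
      simp [hv]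
    rw [this]
    apply mul_ne_zero hr0
    exact mul_ne_zero (Nat.cast_ne_zero.2 hμpos.ne') hur
  have hvne : v ≠ 0 := fun h => hvr (by simp [h])
  rw [hfac, rootMultiplicity_mul (mul_ne_zero (pow_ne_zero _ (X_sub_C_ne_zero r)) hvne),
    rootMultiplicity_X_sub_C_pow, rootMultiplicity_eq_zero (fun h => hvr h), add_zero]



lemma term_strict {r u v : ℝ} (hr : 0 < r) (huv : u < v) (hside : r < u ∨ v < r) :
    v / (v - r) < u / (u - r) := by
  have hden : 0 < (u - r) * (v - r) := by
    rcases hside with h | h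
    · exact mul_pos (by linarith) (by linarith)
    · exact mul_pos_of_neg_of_neg (by linarith) (by linarith)
  have hu : u - r ≠ 0 := by
    rcases hside with h | h
    · exact ne_of_gt (by linarith)
    · exact ne_of_lt (by linarith)
  have hv : v - r ≠ 0 := by
    rcases hside with h | h
    · exact ne_of_gt (by linarith)
    · exact ne_of_lt (by linarith)
  have hid : u / (u - r) - v / (v - r) = r * (v - u) / ((u - r) * (v - r)) := by
    field_simp
    ring
  have hpos : 0 < r * (v - u) / ((u - r) * (v - r)) :=
    div_pos (mul_pos hr (by linarith)) hden
  linarith [hid ▸ hpos]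

lemma phi_mono (k : ℕ) (hk : 0 < k) (r : ℕ → ℝ) (lam : ℝ) {u v : ℝ} (huv : u < v)
    (hrpos : ∀ t < k, 0 < r t) (hside : ∀ t < k, r t < u ∨ v < r t) :
    lam + ∑ t ∈ Finset.range k, v / (v - r t) < lam + ∑ t ∈ Finset.range k, u / (u - r t) := by
  have : ∑ t ∈ Finset.range k, v / (v - r t) < ∑ t ∈ Finset.range k, u / (u - r t) := by
    apply Finset.sum_lt_sum_of_nonempty (Finset.nonempty_range_iff.2 hk.ne')
    intro t ht
    exact term_strict (hrpos t (Finset.mem_range.1 ht)) huv (hside t (Finset.mem_range.1 ht))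
  linarith

lemma key (k i : ℕ) (r : ℕ → ℝ) (m lam c : ℝ)
    (hrpos : ∀ t < k, 0 < r t)
    (hmono : ∀ a b : ℕ, a ≤ b → b < k → r a ≤ r b)
    (hm : ∀ t, t + 1 < k → m * r t ≤ r (t + 1))
    (hm1 : 1 < m)
    (hi : i + 1 < k)
    (hc0 : 0 < c) (hci : c < r i)
    (hq1 : r i < m * c) (hq2 : m * c < r (i + 1))
    (hroot : lam + ∑ t ∈ Finset.range k, c / (c - r t) = 0) :
    0 < lam + ∑ t ∈ Finset.range k, m * c / (m * c - r t) := by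
  have hm0 : (0:ℝ) < m := lt_trans one_pos hm1
  have hkpos : 0 < k := by omega
  have hik : i < k := by omega
  -- side position facts
  have hlt : ∀ t, t ≤ i → r t / m < c := by
    intro t ht
    rw [div_lt_iff₀ hm0]
    calc r t ≤ r i := hmono t i ht hik
    _ < m * c := hq1
    _ = c * m := mul_comm _ _
  have hgt : ∀ t, i + 1 ≤ t → t < k → c < r t / m := by
    intro t ht htk
    rw [lt_div_iff₀ hm0]
    calc c * m = m * c := mul_comm _ _
    _ < r (i+1) := hq2
    _ ≤ r t := hmono _ t ht htk
  have hctr : ∀ t, i ≤ t → t < k → c < r t := by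
    intro t ht htk
    exact lt_of_lt_of_le hci (hmono i t ht htk)
  -- rewrite each term
  have hconv : ∀ t < k, m * c / (m * c - r t) = c / (c - r t / m) := by
    intro t htk
    have hne : m * c - r t ≠ 0 := by
      rcases le_or_gt t i with h | h
      · have := hlt t h
        rw [div_lt_iff₀ hm0] at this
        nlinarith
      · have := hgt t h htk
        rw [lt_div_iff₀ hm0] at this
        nlinarith
    have hne2 : c - r t / m ≠ 0 := by
      intro h0
      apply hne
      have : c = r t / m := by linarith
      rw [this]
      field_simp
      ring
    rw [div_eq_div_iff hne hne2]
    field_simp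
  rw [Finset.sum_congr rfl (fun t ht => hconv t (Finset.mem_range.1 ht))]
  -- pairing
  have hpair : ∀ t, 1 ≤ t → t < k → c / (c - r (t - 1)) ≤ c / (c - r t / m) := by
    intro t ht htk
    have hrm : r (t - 1) ≤ r t / m := by
      rw [le_div_iff₀ hm0]
      have := hm (t - 1) (by omega)
      rw [show t - 1 + 1 = t by omega] at this
      linarith [this]
    rcases le_or_gt t i with h | h
    · -- both below c
      have h2 : r t / m < c := hlt t h
      apply div_le_div_of_nonneg_left hc0.le (by linarith) (by linarith)
    · -- both above c
      have h1 : c < r (t - 1) := hctr (t - 1) (by omega) (by omega)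
      have h2 : c < r t / m := hgt t h htk
      rw [show c - r (t-1) = -(r (t-1) - c) by ring, show c - r t / m = -(r t / m - c) by ring,
        div_neg, div_neg, neg_le_neg_iff]
      apply div_le_div_of_nonneg_left hc0.le (by linarith) (by linarith)
  -- sum manipulations
  have hsplit : ∑ t ∈ Finset.range k, c / (c - r t / m)
      = c / (c - r 0 / m) + ∑ t ∈ Finset.Ico 1 k, c / (c - r t / m) := by
    rw [Finset.range_eq_Ico, Finset.sum_eq_sum_Ico_succ_bot hkpos]
  have hbound : ∑ t ∈ Finset.Ico 1 k, c / (c - r (t - 1))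
      ≤ ∑ t ∈ Finset.Ico 1 k, c / (c - r t / m) := by
    apply Finset.sum_le_sum
    intro t ht
    have := Finset.mem_Ico.1 ht
    exact hpair t this.1 this.2
  have hre : ∑ t ∈ Finset.Ico 1 k, c / (c - r (t - 1)) = ∑ t ∈ Finset.range (k-1), c / (c - r t) := by
    rw [Finset.sum_Ico_eq_sum_range]
    apply Finset.sum_congr rfl
    intro t _
    rw [show 1 + t - 1 = t from by omega]
  have hre2 : ∑ t ∈ Finset.range (k-1), c / (c - r t)
      = (∑ t ∈ Finset.range k, c / (c - r t)) - c / (c - r (k-1)) := by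
    rw [show k = (k-1) + 1 by omega, Finset.sum_range_succ]
    simp [show (k-1)+1-1 = k-1 by omega]
  have hfirst : 0 < c / (c - r 0 / m) := div_pos hc0 (by linarith [hlt 0 (Nat.zero_le i)])
  have hlast : c / (c - r (k-1)) < 0 := by
    apply div_neg_of_pos_of_neg hc0
    have := hctr (k-1) (by omega) (by omega)
    linarith
  have := hbound
  rw [hre, hre2] at this
  linarith [hsplit]



lemma derivative_finset_prod {ι : Type*} [DecidableEq ι] (s : Finset ι) (f : ι → Polynomial ℝ) :
    Polynomial.derivative (∏ i ∈ s, f i)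
      = ∑ i ∈ s, (∏ j ∈ s.erase i, f j) * Polynomial.derivative (f i) := by
  classical
  induction s using Finset.induction_on with
  | empty => simp
  | insert _ _ hnotmem ih =>
    rename_i a s
    rw [Finset.prod_insert hnotmem, derivative_mul, ih, Finset.sum_insert hnotmem,
      Finset.erase_insert hnotmem, Finset.mul_sum]
    congr 1
    · rw [mul_comm]
    apply Finset.sum_congr rfl
    intro i hi
    rw [Finset.erase_insert_of_ne (by rintro rfl; exact hnotmem hi), Finset.prod_insert
      (fun h => hnotmem (Finset.mem_of_mem_erase h))]
    ring

-- φ-factorization at a non-root point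
lemma phi_factor (k : ℕ) (r : ℕ → ℝ) (lam x : ℝ) (hx : ∀ t < k, x ≠ r t) :
    lam * (∏ t ∈ Finset.range k, (x - r t))
      + x * ∑ i ∈ Finset.range k, ∏ t ∈ (Finset.range k).erase i, (x - r t)
    = (∏ t ∈ Finset.range k, (x - r t)) * (lam + ∑ t ∈ Finset.range k, x / (x - r t)) := by
  rw [mul_add, mul_comm (∏ t ∈ Finset.range k, (x - r t)) lam, Finset.mul_sum]
  congr 1
  rw [Finset.mul_sum]
  apply Finset.sum_congr rfl
  intro i hi
  have hi' := Finset.mem_range.1 hi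
  have hne : x - r i ≠ 0 := sub_ne_zero.2 (hx i hi')
  rw [← Finset.mul_prod_erase _ _ hi]
  field_simp

-- eval of T in terms of Π and S
lemma eval_T_prod (lam lc : ℝ) (k : ℕ) (r : ℕ → ℝ) (p : Polynomial ℝ)
    (hp : p = Polynomial.C lc * ∏ t ∈ Finset.range k, (Polynomial.X - Polynomial.C (r t)))
    (x : ℝ) :
    (Polynomial.C lam * p + Polynomial.X * Polynomial.derivative p).eval x
      = lc * (lam * (∏ t ∈ Finset.range k, (x - r t))
        + x * ∑ i ∈ Finset.range k, ∏ t ∈ (Finset.range k).erase i, (x - r t)) := by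
  have hev : p.eval x = lc * ∏ t ∈ Finset.range k, (x - r t) := by
    simp [hp, eval_prod]
  have hder : (Polynomial.derivative p).eval x
      = lc * ∑ i ∈ Finset.range k, ∏ t ∈ (Finset.range k).erase i, (x - r t) := by
    rw [hp, derivative_C_mul, derivative_finset_prod]
    simp only [eval_mul, eval_C, eval_finset_sum, eval_prod, eval_sub, eval_X,
      derivative_sub, derivative_X, derivative_C, sub_zero, eval_one, mul_one]
  simp only [eval_add, eval_mul, eval_C, eval_X, hev, hder]
  ring



lemma comp_neg_invol (p : Polynomial ℝ) : (p.comp (-X)).comp (-X) = p := by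
  rw [Polynomial.comp_assoc]
  simp

lemma comp_neg_ne_zero {p : Polynomial ℝ} (hp : p ≠ 0) : p.comp (-X) ≠ 0 := by
  intro h
  apply hp
  rw [← comp_neg_invol p, h, zero_comp]

lemma natDegree_comp_neg (p : Polynomial ℝ) : (p.comp (-X)).natDegree = p.natDegree := by
  rw [natDegree_comp]
  simp

lemma rootMultiplicity_comp_neg (p : Polynomial ℝ) (hp : p ≠ 0) (a : ℝ) :
    (p.comp (-X)).rootMultiplicity a = p.rootMultiplicity (-a) := by
  have key : ∀ (q : Polynomial ℝ) (b : ℝ) (n : ℕ),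
      (X - C b) ^ n ∣ q.comp (-X) → (X - C (-b)) ^ n ∣ q := by
    intro q b n ⟨w, hw⟩
    refine ⟨(-1) ^ n * w.comp (-X), ?_⟩
    have := congrArg (fun z : Polynomial ℝ => z.comp (-X)) hw
    rw [comp_neg_invol] at this
    rw [this, mul_comp, pow_comp, sub_comp, X_comp, C_comp,
      show (-X - C b : Polynomial ℝ) = -1 * (X - C (-b)) by rw [C_neg]; ring, mul_pow]
    ring
  apply le_antisymm
  · rw [le_rootMultiplicity_iff hp]
    have h1 : (X - C a) ^ ((p.comp (-X)).rootMultiplicity a) ∣ p.comp (-X) :=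
      pow_rootMultiplicity_dvd _ _
    exact key p a _ h1
  · rw [le_rootMultiplicity_iff (comp_neg_ne_zero hp)]
    have h1 : (X - C (-a)) ^ (p.rootMultiplicity (-a)) ∣ p := pow_rootMultiplicity_dvd _ _
    have h2 := key (p.comp (-X)) (-a) (p.rootMultiplicity (-a)) (by rwa [comp_neg_invol])
    rwa [neg_neg] at h2

lemma roots_comp_neg (p : Polynomial ℝ) (hp : p ≠ 0) :
    (p.comp (-X)).roots = p.roots.map (fun x => -x) := by
  classical
  ext a
  rw [count_roots, rootMultiplicity_comp_neg p hp a,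
    ← count_roots, ← Multiset.count_map_eq_count' _ _ neg_injective (-a), neg_neg]

lemma T_comp_neg (lam : ℝ) (p : Polynomial ℝ) :
    Polynomial.C lam * (p.comp (-X)) + Polynomial.X * Polynomial.derivative (p.comp (-X))
      = (Polynomial.C lam * p + Polynomial.X * Polynomial.derivative p).comp (-X) := by
  rw [Polynomial.derivative_comp]
  simp only [derivative_neg, derivative_X, add_comp, mul_comp, C_comp, X_comp]
  ring



lemma sorted_getD_mono {L : List ℝ} (h : L.Pairwise (· ≤ ·)) {i j : ℕ} (hij : i ≤ j)
    (hj : j < L.length) : L.getD i 0 ≤ L.getD j 0 := by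
  have hi : i < L.length := lt_of_le_of_lt hij hj
  rw [List.getD_eq_getElem L 0 hi, List.getD_eq_getElem L 0 hj]
  rcases eq_or_lt_of_le hij with rfl | hlt
  · exact le_refl _
  · exact List.pairwise_iff_getElem.1 h i j hi hj hlt

lemma sorted_getD_strict {L : List ℝ} (h : L.Pairwise (· < ·)) {i j : ℕ} (hij : i < j)
    (hj : j < L.length) : L.getD i 0 < L.getD j 0 := by
  have hi : i < L.length := lt_trans hij hj
  rw [List.getD_eq_getElem L 0 hi, List.getD_eq_getElem L 0 hj]
  exact List.pairwise_iff_getElem.1 h i j hi hj hij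

lemma getD_mem {L : List ℝ} {i : ℕ} (hi : i < L.length) : L.getD i 0 ∈ L := by
  rw [List.getD_eq_getElem L 0 hi]
  exact List.getElem_mem hi

lemma chain_lt {k : ℕ} {f : ℕ → ℝ} (h : ∀ i, i + 1 < k → f i < f (i + 1)) :
    ∀ a b, a < b → b < k → f a < f b := by
  intro a b hab hbk
  induction b with
  | zero => omega
  | succ n ih =>
    rcases Nat.lt_or_ge a n with h' | h'
    · exact lt_trans (ih h' (by omega)) (h n hbk)
    · have : a = n := by omega
      subst this
      exact h a hbk

lemma chain_le {k : ℕ} {f : ℕ → ℝ} (h : ∀ i, i + 1 < k → f i < f (i + 1)) :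
    ∀ a b, a ≤ b → b < k → f a ≤ f b := by
  intro a b hab hbk
  rcases eq_or_lt_of_le hab with rfl | h'
  · exact le_refl _
  · exact (chain_lt h a b h' hbk).le

lemma sorted_map_of_chain {k : ℕ} {f : ℕ → ℝ} (h : ∀ a b, a < b → b < k → f a < f b) :
    ((List.range k).map f).Pairwise (· ≤ ·) := by
  apply List.pairwise_iff_getElem.2
  intro i j hi hj hij
  simp only [List.length_map, List.length_range] at hi hj
  simp only [List.getElem_map, List.getElem_range]
  exact (h i j hij hj).le

lemma list_eq_map_getD {L : List ℝ} {k : ℕ} (hL : L.length = k) :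
    L = (List.range k).map (fun i => L.getD i 0) := by
  apply List.ext_getElem
  · simp [hL]
  · intro i h1 h2
    simp only [List.getElem_map, List.getElem_range]
    rw [List.getD_eq_getElem L 0 h1]



lemma sortedAbs_eq (q : Polynomial ℝ) (hpos : ∀ x ∈ q.roots, 0 < x) :
    sortedAbsRoots q = sortedRoots q := by
  unfold sortedAbsRoots sortedRoots
  congr 1
  rw [Multiset.map_congr rfl (fun x hx => abs_of_pos (hpos x hx))]
  exact Multiset.map_id' _

lemma lmesh_ge_one (q : Polynomial ℝ) (hpos : ∀ x ∈ q.roots, 0 < x) : 1 ≤ lmesh q := by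
  rw [lmesh, sortedAbs_eq q hpos]
  apply le_iInf₂
  intro i hi
  have hi' : i + 1 < (sortedRoots q).length := by
    have := Finset.mem_range.1 hi
    omega
  rw [ENNReal.one_le_ofReal]
  have hmem : (sortedRoots q).getD i 0 ∈ q.roots := by
    have := getD_mem (lt_trans (Nat.lt_succ_self i) hi')
    rwa [sortedRoots, Multiset.mem_sort] at this
  have h0 : 0 < (sortedRoots q).getD i 0 := hpos _ hmem
  rw [one_le_div h0]
  exact sorted_getD_mono (Multiset.pairwise_sort _ _) (Nat.le_succ i) hi'


theorem posCase (k : ℕ) (hk : 2 ≤ k) (p : Polynomial ℝ) (hdeg : p.natDegree = k)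
    (hcard : Multiset.card p.roots = k) (hpos : ∀ x ∈ p.roots, 0 < x)
    (lam : ℝ) (hlam : 0 < lam) :
    Multiset.card (T lam p).roots = (T lam p).natDegree ∧
      (∀ x ∈ (T lam p).roots, 0 < x) ∧ lmesh p ≤ lmesh (T lam p) := by
  classical
  have hp0 : p ≠ 0 := by
    intro h
    rw [h, natDegree_zero] at hdeg
    omega
  obtain ⟨hTdeg, hT0⟩ := natDegree_T lam p hp0 hlam
  -- the sorted list of distinct roots
  set L := p.roots.toFinset.sort (· ≤ ·) with hL
  set d := L.length with hd
  have hLsortLT : L.Pairwise (· < ·) := (Finset.sortedLT_sort _).pairwise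
  have hLsort : L.Pairwise (· ≤ ·) := Finset.pairwise_sort _ _
  set s : ℕ → ℝ := fun j => L.getD j 0 with hs
  have hsmem : ∀ j < d, s j ∈ p.roots := by
    intro j hj
    have h1 : s j ∈ L := getD_mem hj
    rw [hL, Finset.mem_sort] at h1
    exact Multiset.mem_toFinset.1 h1
  have hspos : ∀ j < d, 0 < s j := fun j hj => hpos _ (hsmem j hj)
  have hsroot : ∀ j < d, p.IsRoot (s j) := fun j hj =>
    (Polynomial.mem_roots hp0).1 (hsmem j hj)
  have hsstrict : ∀ a b, a < b → b < d → s a < s b := fun a b hab hbd =>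
    sorted_getD_strict hLsortLT hab hbd
  have hsmono : ∀ a b, a ≤ b → b < d → s a ≤ s b := by
    intro a b hab hbd
    rcases eq_or_lt_of_le hab with rfl | h
    · exact le_refl _
    · exact (hsstrict a b h hbd).le
  have hd1 : 1 ≤ d := by
    rw [hd, hL, Finset.length_sort]
    have : p.roots ≠ 0 := by
      intro h
      rw [h] at hcard
      simp at hcard
      omega
    have : p.roots.toFinset.Nonempty := by
      obtain ⟨x, hx⟩ := Multiset.exists_mem_of_ne_zero this
      exact ⟨x, Multiset.mem_toFinset.2 hx⟩
    exact Finset.card_pos.2 this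
  -- Rolle points
  set a : ℕ → ℝ := fun j => if j = 0 then 0 else s (j - 1) with ha
  have ha0 : ∀ j < d, 0 ≤ a j := by
    intro j hj
    simp only [ha]
    by_cases h : j = 0
    · simp [h]
    · rw [if_neg h]
      exact (hspos (j-1) (by omega)).le
  have haj : ∀ j < d, a j < s j := by
    intro j hj
    simp only [ha]
    by_cases h : j = 0
    · rw [if_pos h]
      subst h
      exact hspos 0 hj
    · rw [if_neg h]
      exact hsstrict (j-1) j (by omega) hj
  have haroot : ∀ j < d, a j = 0 ∨ p.eval (a j) = 0 := by
    intro j hj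
    simp only [ha]
    by_cases h : j = 0
    · left; rw [if_pos h]
    · right
      rw [if_neg h]
      exact hsroot (j-1) (by omega)
  have hex : ∀ j, ∃ x, j < d → x ∈ Set.Ioo (a j) (s j) ∧ (T lam p).eval x = 0 := by
    intro j
    by_cases hj : j < d
    · obtain ⟨x, hx1, hx2⟩ := rolle_T lam hlam p (ha0 j hj) (haj j hj) (haroot j hj)
        (hsroot j hj)
      exact ⟨x, fun _ => ⟨hx1, hx2⟩⟩
    · exact ⟨0, fun h => absurd h hj⟩
  choose c hc using hex
  have hcIoo : ∀ j < d, c j ∈ Set.Ioo (a j) (s j) := fun j hj => (hc j hj).1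
  have hcroot : ∀ j < d, (T lam p).eval (c j) = 0 := fun j hj => (hc j hj).2
  have hcpos : ∀ j < d, 0 < c j := fun j hj => lt_of_le_of_lt (ha0 j hj) (hcIoo j hj).1
  have hclt : ∀ j < d, c j < s j := fun j hj => (hcIoo j hj).2
  have hcgt : ∀ j, 1 ≤ j → j < d → s (j - 1) < c j := by
    intro j h1 hj
    have h2 := (hcIoo j hj).1
    have h3 : a j = s (j - 1) := by
      simp only [ha]
      rw [if_neg (by omega : ¬ j = 0)]
    rwa [h3] at h2
  have hcs : ∀ j < d, ∀ t < d, c j ≠ s t := by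
    intro j hj t ht heq
    rcases lt_or_ge t j with h | h
    · have h1 : s t ≤ s (j - 1) := hsmono t (j-1) (by omega) (by omega)
      have h2 := hcgt j (by omega) hj
      rw [heq] at h2
      linarith
    · have h1 : s j ≤ s t := hsmono j t h ht
      have h2 := hclt j hj
      rw [heq] at h2
      linarith
  have hcc : ∀ j t, j < t → t < d → c j < c t := by
    intro j t hjt htd
    calc c j < s j := hclt j (by omega)
    _ ≤ s (t - 1) := hsmono j (t-1) (by omega) (by omega)
    _ < c t := hcgt t (by omega) htd
  -- multiplicities
  set μ : ℕ → ℕ := fun j => p.roots.count (s j) with hμ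
  have hμpos : ∀ j < d, 1 ≤ μ j := by
    intro j hj
    rw [hμ]
    exact Multiset.one_le_count_iff_mem.2 (hsmem j hj)
  have hmultT : ∀ j < d, (T lam p).roots.count (s j) = μ j - 1 := by
    intro j hj
    have h1 := mult_T lam p hp0 (hspos j hj).ne' (hsroot j hj)
    rw [show T lam p = Polynomial.C lam * p + Polynomial.X * Polynomial.derivative p from rfl,
      Polynomial.count_roots, h1, ← Polynomial.count_roots p]
  set M : Multiset ℝ :=
    (Multiset.range d).bind (fun j => c j ::ₘ Multiset.replicate (μ j - 1) (s j)) with hM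
  have hsum_range : ∀ (g : ℕ → ℕ),
      (Multiset.map g (Multiset.range d)).sum = ∑ j ∈ Finset.range d, g j := by
    intro g
    rw [Finset.sum_eq_multiset_sum, Finset.range_val]
  have hMcard : Multiset.card M = k := by
    have hstep : Multiset.card M = (Multiset.map μ (Multiset.range d)).sum := by
      rw [hM, Multiset.card_bind]
      apply congrArg Multiset.sum
      apply Multiset.map_congr rfl
      intro j hj
      rw [Multiset.mem_range] at hj
      show Multiset.card (c j ::ₘ Multiset.replicate (μ j - 1) (s j)) = μ j
      rw [Multiset.card_cons, Multiset.card_replicate]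
      have := hμpos j hj
      omega
    rw [hstep, hsum_range μ]
    have h2 : ∑ j ∈ Finset.range d, μ j = ∑ x ∈ p.roots.toFinset, p.roots.count x := by
      apply Finset.sum_bij (i := fun j _ => s j)
      · intro j hj
        exact Multiset.mem_toFinset.2 (hsmem j (by simpa using hj))
      · intro j1 hj1 j2 hj2 heq
        by_contra hne
        rcases lt_or_gt_of_ne hne with h | h
        · exact absurd heq (hsstrict j1 j2 h (by simpa using hj2)).ne
        · exact absurd heq.symm (hsstrict j2 j1 h (by simpa using hj1)).ne
      · intro x hx
        have : x ∈ L := by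
          rw [hL, Finset.mem_sort]
          exact hx
        obtain ⟨n, hn, heq⟩ := List.mem_iff_getElem.1 this
        refine ⟨n, by simpa using hn, ?_⟩
        show L.getD n 0 = x
        rw [List.getD_eq_getElem L 0 hn]
        exact heq
      · intro j hj
        rfl
    rw [h2, Multiset.toFinset_sum_count_eq, hcard]
  have hMle : M ≤ (T lam p).roots := by
    rw [Multiset.le_iff_count]
    intro x
    have hcount : Multiset.count x M = ∑ j ∈ Finset.range d,
        ((if x = c j then 1 else 0) + (if s j = x then μ j - 1 else 0)) := by
      rw [hM, Multiset.count_bind, ← hsum_range]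
      apply congrArg Multiset.sum
      apply Multiset.map_congr rfl
      intro j hj
      show Multiset.count x (c j ::ₘ Multiset.replicate (μ j - 1) (s j))
        = (if x = c j then 1 else 0) + (if s j = x then μ j - 1 else 0)
      rw [Multiset.count_cons, Multiset.count_replicate, add_comm]
    rw [hcount]
    by_cases hx1 : ∃ j, j < d ∧ x = c j
    · obtain ⟨j0, hj0, rfl⟩ := hx1
      have hsum : ∑ j ∈ Finset.range d,
          ((if c j0 = c j then 1 else 0) + (if s j = c j0 then μ j - 1 else 0)) = 1 := by
        have h1 : ∑ j ∈ Finset.range d,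
            ((if c j0 = c j then 1 else 0) + (if s j = c j0 then μ j - 1 else 0))
            = (if c j0 = c j0 then 1 else 0) + (if s j0 = c j0 then μ j0 - 1 else 0) := by
          apply Finset.sum_eq_single_of_mem j0 (Finset.mem_range.2 hj0)
          intro j hj hne
          rw [Finset.mem_range] at hj
          have hA : ¬ c j0 = c j := by
            rcases lt_or_gt_of_ne hne with h | h
            · exact (hcc j j0 h hj0).ne'
            · exact (hcc j0 j h hj).ne
          rw [if_neg hA, if_neg (fun h => hcs j0 hj0 j hj h.symm)]
          rfl
        rw [h1, if_pos rfl, if_neg (fun h => hcs j0 hj0 j0 hj0 h.symm)]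
      rw [hsum]
      rw [Multiset.one_le_count_iff_mem, Polynomial.mem_roots hT0]
      exact hcroot j0 hj0
    · by_cases hx2 : ∃ t, t < d ∧ x = s t
      · obtain ⟨t0, ht0, rfl⟩ := hx2
        have hsum : ∑ j ∈ Finset.range d,
            ((if s t0 = c j then 1 else 0) + (if s j = s t0 then μ j - 1 else 0)) = μ t0 - 1 := by
          have h1 : ∑ j ∈ Finset.range d,
              ((if s t0 = c j then 1 else 0) + (if s j = s t0 then μ j - 1 else 0))
              = (if s t0 = c t0 then 1 else 0) + (if s t0 = s t0 then μ t0 - 1 else 0) := by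
            apply Finset.sum_eq_single_of_mem t0 (Finset.mem_range.2 ht0)
            intro j hj hne
            rw [Finset.mem_range] at hj
            have hB : ¬ s j = s t0 := by
              rcases lt_or_gt_of_ne hne with h | h
              · exact (hsstrict j t0 h ht0).ne
              · exact (hsstrict t0 j h hj).ne'
            rw [if_neg (fun h => hcs j hj t0 ht0 h.symm), if_neg hB]
            rfl
          rw [h1, if_neg (fun h => hcs t0 ht0 t0 ht0 h.symm), if_pos rfl]
          omega
        rw [hsum, hmultT t0 ht0]
      · have hsum : ∑ j ∈ Finset.range d,
            ((if x = c j then 1 else 0) + (if s j = x then μ j - 1 else 0)) = 0 := by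
          apply Finset.sum_eq_zero
          intro j hj
          rw [Finset.mem_range] at hj
          rw [if_neg (fun h => hx1 ⟨j, hj, h⟩), if_neg (fun h => hx2 ⟨j, hj, h.symm⟩)]
          rfl
        rw [hsum]
        exact Nat.zero_le _
  have hMeq : M = (T lam p).roots := by
    apply Multiset.eq_of_le_of_card_le hMle
    rw [hMcard]
    calc Multiset.card (T lam p).roots ≤ (T lam p).natDegree := Polynomial.card_roots' _
    _ = k := by rw [hTdeg, hdeg]
  have hgoal1 : Multiset.card (T lam p).roots = (T lam p).natDegree := by
    rw [← hMeq, hMcard, hTdeg, hdeg]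
  have hgoal2 : ∀ x ∈ (T lam p).roots, 0 < x := by
    intro x hx
    rw [← hMeq, hM, Multiset.mem_bind] at hx
    obtain ⟨j, hj, hxm⟩ := hx
    rw [Multiset.mem_range] at hj
    rcases Multiset.mem_cons.1 hxm with rfl | h
    · exact hcpos j hj
    · rw [Multiset.eq_of_mem_replicate h]
      exact hspos j hj
  refine ⟨hgoal1, hgoal2, ?_⟩
  rcases le_or_gt (lmesh p) 1 with hsm | hbig
  · exact le_trans hsm (lmesh_ge_one _ hgoal2)
  set R := sortedRoots p with hR
  set r : ℕ → ℝ := fun t => R.getD t 0 with hr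
  have hRlen : R.length = k := by rw [hR, sortedRoots, Multiset.length_sort, hcard]
  have hRsorted : R.Pairwise (· ≤ ·) := Multiset.pairwise_sort _ _
  have hrmem : ∀ t < k, r t ∈ p.roots := by
    intro t ht
    have h1 := getD_mem (show t < R.length by omega)
    rw [hR, sortedRoots, Multiset.mem_sort] at h1
    exact h1
  have hrpos : ∀ t < k, 0 < r t := fun t ht => hpos _ (hrmem t ht)
  have hlm : lmesh p = ⨅ i ∈ Finset.range (R.length - 1),
      ENNReal.ofReal (R.getD (i + 1) 0 / R.getD i 0) := by
    rw [lmesh, sortedAbs_eq p hpos]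
  have hratio : ∀ i, i + 1 < k → 1 < r (i + 1) / r i := by
    intro i hi
    by_contra hcon
    push_neg at hcon
    have h1 : lmesh p ≤ ENNReal.ofReal (r (i + 1) / r i) := by
      rw [hlm]
      exact iInf₂_le i (Finset.mem_range.2 (by omega))
    have h2 : ENNReal.ofReal (r (i + 1) / r i) ≤ 1 := by
      calc ENNReal.ofReal (r (i + 1) / r i) ≤ ENNReal.ofReal 1 := ENNReal.ofReal_le_ofReal hcon
      _ = 1 := ENNReal.ofReal_one
    exact absurd (lt_of_lt_of_le hbig (le_trans h1 h2)) (lt_irrefl _)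
  have hrstrictc : ∀ i, i + 1 < k → r i < r (i + 1) := by
    intro i hi
    have h1 := hratio i hi
    rwa [one_lt_div (hrpos i (by omega))] at h1
  have hrmono : ∀ a b, a ≤ b → b < k → r a ≤ r b := chain_le hrstrictc
  have hrsmono : ∀ a b, a < b → b < k → r a < r b := chain_lt hrstrictc
  obtain ⟨i0, hi0mem, hi0min⟩ := Finset.exists_min_image (Finset.range (k - 1))
    (fun i => r (i + 1) / r i) ⟨0, Finset.mem_range.2 (by omega)⟩
  set m := r (i0 + 1) / r i0 with hm
  have hi0k : i0 + 1 < k := by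
    have := Finset.mem_range.1 hi0mem
    omega
  have hm1 : 1 < m := hratio i0 hi0k
  have hmr : ∀ t, t + 1 < k → m * r t ≤ r (t + 1) := by
    intro t ht
    have h1 : m ≤ r (t + 1) / r t := hi0min t (Finset.mem_range.2 (by omega))
    rw [le_div_iff₀ (hrpos t (by omega))] at h1
    linarith
  have hlmp : lmesh p ≤ ENNReal.ofReal m := by
    rw [hlm]
    exact iInf₂_le i0 (Finset.mem_range.2 (by omega))
  -- identification of L with R
  have hRnodup : R.Nodup := by
    apply List.pairwise_iff_getElem.2
    intro i j hi hj hij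
    have e1 : R[i] = r i := (List.getD_eq_getElem R 0 hi).symm
    have e2 : R[j] = r j := (List.getD_eq_getElem R 0 hj).symm
    rw [e1, e2]
    exact (hrsmono i j hij (by omega)).ne
  have hrootsnodup : p.roots.Nodup := by
    have h2 : (↑R : Multiset ℝ) = p.roots := Multiset.sort_eq _ _
    rw [← h2]
    exact Multiset.coe_nodup.2 hRnodup
  have hLR : L = R := by
    apply List.Perm.eq_of_pairwise' hLsort hRsorted
    rw [← Multiset.coe_eq_coe]
    have h1 : (↑L : Multiset ℝ) = p.roots := by
      rw [hL, Finset.sort_eq, Multiset.toFinset_val, Multiset.dedup_eq_self.2 hrootsnodup]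
    have h2 : (↑R : Multiset ℝ) = p.roots := Multiset.sort_eq _ _
    rw [h1, h2]
  have hdk : d = k := by rw [hd, hLR, hRlen]
  have hsr : ∀ t, s t = r t := by
    intro t
    show L.getD t 0 = R.getD t 0
    rw [hLR]
  have hμ1 : ∀ j < d, μ j = 1 := fun j hj =>
    Multiset.count_eq_one_of_mem hrootsnodup (hsmem j hj)
  have hMc : M = Multiset.map c (Multiset.range k) := by
    rw [hM]
    have hcongr : ∀ j ∈ Multiset.range d,
        (c j ::ₘ Multiset.replicate (μ j - 1) (s j)) = {c j} := by
      intro j hj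
      rw [Multiset.mem_range] at hj
      rw [hμ1 j hj]
      simp
    rw [Multiset.bind_congr hcongr, Multiset.bind_singleton, hdk]
  have hcstrict : ∀ a b, a < b → b < k → c a < c b := fun a b hab hbk => hcc a b hab (by omega)
  have hTpsorted : sortedRoots (T lam p) = (List.range k).map c := by
    apply List.Perm.eq_of_pairwise' (Multiset.pairwise_sort _ _) (sorted_map_of_chain hcstrict)
    have h2 : ((((List.range k).map c : List ℝ)) : Multiset ℝ) = Multiset.map c (Multiset.range k) := by
      rw [← Multiset.map_coe]
      rfl
    apply Multiset.coe_eq_coe.1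
    show ((T lam p).roots.sort (· ≤ ·) : Multiset ℝ) = _
    rw [Multiset.sort_eq, ← hMeq, hMc]
    exact h2.symm
  -- factorization of p
  have hfac : p = Polynomial.C p.leadingCoeff
      * ∏ t ∈ Finset.range k, (Polynomial.X - Polynomial.C (r t)) := by
    have h0 := Polynomial.C_leadingCoeff_mul_prod_multiset_X_sub_C (p := p) (by rw [hcard, hdeg])
    have hroots_eq : p.roots = Multiset.map r (Multiset.range k) := by
      have h2 : (↑R : Multiset ℝ) = p.roots := Multiset.sort_eq _ _
      rw [← h2]
      have h3 : R = (List.range k).map r := list_eq_map_getD hRlen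
      conv_lhs => rw [h3]
      rw [← Multiset.map_coe]
      rfl
    have h4 : (Multiset.map (fun a => Polynomial.X - Polynomial.C a) p.roots).prod
        = ∏ t ∈ Finset.range k, (Polynomial.X - Polynomial.C (r t)) := by
      rw [hroots_eq, Multiset.map_map, Finset.prod_eq_multiset_prod, Finset.range_val]
      rfl
    rw [← h4]
    exact h0.symm
  have hlc : p.leadingCoeff ≠ 0 := leadingCoeff_ne_zero.2 hp0
  have hphiroot : ∀ j < k, lam + ∑ t ∈ Finset.range k, c j / (c j - r t) = 0 := by
    intro j hj
    have h1 := hcroot j (by omega)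
    rw [show T lam p = Polynomial.C lam * p + Polynomial.X * Polynomial.derivative p from rfl,
      eval_T_prod lam p.leadingCoeff k r p hfac (c j)] at h1
    have h2 : lam * (∏ t ∈ Finset.range k, (c j - r t))
        + c j * ∑ i ∈ Finset.range k, ∏ t ∈ (Finset.range k).erase i, (c j - r t) = 0 := by
      rcases mul_eq_zero.1 h1 with h | h
      · exact absurd h hlc
      · exact h
    have hne : ∀ t < k, c j ≠ r t := by
      intro t ht
      rw [← hsr t]
      exact hcs j (by omega) t (by omega)
    rw [phi_factor k r lam (c j) hne] at h2
    have hprodne : (∏ t ∈ Finset.range k, (c j - r t)) ≠ 0 := by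
      rw [Finset.prod_ne_zero_iff]
      intro t ht
      exact sub_ne_zero.2 (hne t (Finset.mem_range.1 ht))
    rcases mul_eq_zero.1 h2 with h | h
    · exact absurd h hprodne
    · exact h
  have hkeyb : ∀ i, i + 1 < k → m * c i ≤ c (i + 1) := by
    intro i hi
    have hciri : c i < r i := by
      rw [← hsr i]
      exact hclt i (by omega)
    have hci1ri : r i < c (i + 1) := by
      have h1 := hcgt (i + 1) (by omega) (by omega)
      rwa [show i + 1 - 1 = i from rfl, hsr i] at h1
    by_cases hcase : m * c i ≤ r i
    · linarith
    · push_neg at hcase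
      have hup : m * c i < r (i + 1) := by
        have h1 : m * c i < m * r i := mul_lt_mul_of_pos_left hciri (by linarith : (0:ℝ) < m)
        exact lt_of_lt_of_le h1 (hmr i hi)
      have hkey0 := key k i r m lam (c i) hrpos hrmono hmr hm1 hi (hcpos i (by omega)) hciri
        hcase hup (hphiroot i (by omega))
      by_contra hcon
      push_neg at hcon
      have hside : ∀ t < k, r t < c (i + 1) ∨ m * c i < r t := by
        intro t ht
        rcases le_or_gt t i with h | h
        · exact Or.inl (lt_of_le_of_lt (hrmono t i h (by omega)) hci1ri)
        · exact Or.inr (lt_of_lt_of_le hup (hrmono (i + 1) t h ht))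
      have hmono2 := phi_mono k (by omega) r lam hcon hrpos hside
      have h3 := hphiroot (i + 1) hi
      linarith
  calc lmesh p ≤ ENNReal.ofReal m := hlmp
  _ ≤ lmesh (T lam p) := by
    rw [lmesh, sortedAbs_eq _ hgoal2, hTpsorted]
    apply le_iInf₂
    intro i hi
    rw [Finset.mem_range, List.length_map, List.length_range] at hi
    have hgetD : ∀ t, t < k → ((List.range k).map c).getD t 0 = c t := by
      intro t ht
      rw [List.getD_eq_getElem _ 0 (by simp [ht] : t < ((List.range k).map c).length)]
      simp
    rw [hgetD i (by omega), hgetD (i + 1) (by omega)]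
    apply ENNReal.ofReal_le_ofReal
    rw [le_div_iff₀ (hcpos i (by omega))]
    have h1 := hkeyb i (by omega)
    linarith

lemma lmesh_congr {f g : Polynomial ℝ} (h : sortedAbsRoots f = sortedAbsRoots g) :
    lmesh f = lmesh g := by
  rw [lmesh, lmesh, h]

lemma sortedAbsRoots_neg {f g : Polynomial ℝ} (h : g.roots = f.roots.map (fun x => -x)) :
    sortedAbsRoots g = sortedAbsRoots f := by
  unfold sortedAbsRoots
  rw [h, Multiset.map_map]
  congr 1
  apply Multiset.map_congr rfl
  intro x _
  simp [Function.comp, abs_neg]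

end LmeshAux

open LmeshAux

/-- For any `λ > 0` and any polynomial `p` of degree `k ≥ 2` with all roots real and of
the same sign, the polynomial `T(p) = λ p + x p'` has all roots real and of the same
sign, and `lmesh(λ p + x p') ≥ lmesh(p)`. -/
theorem stmt_5 (k : ℕ) (hk : 2 ≤ k) (p : Polynomial ℝ) (hdeg : p.natDegree = k)
    (hhyp : Hyperbolic p)
    (hsign : (∀ x ∈ p.roots, 0 < x) ∨ (∀ x ∈ p.roots, x < 0))
    (lam : ℝ) (hlam : 0 < lam) :
    (Hyperbolic (Polynomial.C lam * p + Polynomial.X * Polynomial.derivative p) ∧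
      ((∀ x ∈ (Polynomial.C lam * p + Polynomial.X * Polynomial.derivative p).roots, 0 < x) ∨
       (∀ x ∈ (Polynomial.C lam * p + Polynomial.X * Polynomial.derivative p).roots, x < 0))) ∧
    lmesh p ≤ lmesh (Polynomial.C lam * p + Polynomial.X * Polynomial.derivative p) := by
  have hp0 : p ≠ 0 := by
    intro h
    rw [h, Polynomial.natDegree_zero] at hdeg
    omega
  have hcard : Multiset.card p.roots = k := by
    rw [Hyperbolic] at hhyp
    rw [hhyp, hdeg]
  rcases hsign with hplus | hminus
  · obtain ⟨h1, h2, h3⟩ := posCase k hk p hdeg hcard hplus lam hlam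
    exact ⟨⟨h1, Or.inl h2⟩, h3⟩
  · set q := p.comp (-Polynomial.X) with hq
    have hq0 : q ≠ 0 := comp_neg_ne_zero hp0
    have hqdeg : q.natDegree = k := by rw [hq, natDegree_comp_neg, hdeg]
    have hqroots : q.roots = p.roots.map (fun x => -x) := roots_comp_neg p hp0
    have hqcard : Multiset.card q.roots = k := by rw [hqroots, Multiset.card_map, hcard]
    have hqpos : ∀ x ∈ q.roots, 0 < x := by
      rw [hqroots]
      intro x hx
      obtain ⟨y, hy, rfl⟩ := Multiset.mem_map.1 hx
      exact neg_pos.2 (hminus y hy)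
    obtain ⟨h1, h2, h3⟩ := posCase k hk q hqdeg hqcard hqpos lam hlam
    have hTq : T lam q = (T lam p).comp (-Polynomial.X) := T_comp_neg lam p
    have hTp0 : T lam p ≠ 0 := (natDegree_T lam p hp0 hlam).2
    have hTqroots : (T lam q).roots = (T lam p).roots.map (fun x => -x) := by
      rw [hTq]
      exact roots_comp_neg (T lam p) hTp0
    constructor
    constructor
    · show Multiset.card (T lam p).roots = (T lam p).natDegree
      have e1 : Multiset.card (T lam q).roots = Multiset.card (T lam p).roots := by
        rw [hTqroots, Multiset.card_map]
      have e2 : (T lam q).natDegree = (T lam p).natDegree := by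
        rw [hTq, natDegree_comp_neg]
      rw [← e1, ← e2]
      exact h1
    · right
      intro x hx
      have : -x ∈ (T lam q).roots := by
        rw [hTqroots]
        exact Multiset.mem_map.2 ⟨x, hx, rfl⟩
      have := h2 _ this
      linarith
    · show lmesh p ≤ lmesh (T lam p)
      have e3 : lmesh q = lmesh p := lmesh_congr (sortedAbsRoots_neg hqroots)
      have e4 : lmesh (T lam q) = lmesh (T lam p) := lmesh_congr (sortedAbsRoots_neg hTqroots)
      rw [← e3, ← e4]
      exact h3


end
end

section
/- For every real polynomial Q of degree k ≥ 1 and every real number a, one has Q + a·x·Q' = ((x+1)^{k-1}·((1+ak)x + 1)) * Q, where * denotes the Schur–Szegő product of degree-k polynomials. -/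
open Polynomial
open scoped ENNReal

noncomputable section

lemma key_arith (l m : ℕ) (h : m + 1 ≤ l + 1) (a c : ℝ) :
    ((l+1).choose (m+1) : ℝ)⁻¹ * ((1 + a * (l+1)) * (l.choose m) + l.choose (m+1)) * c
      = c + a * ((m+1) * c) := by
  have h1 : (l.choose m : ℝ) + l.choose (m+1) = (l+1).choose (m+1) := by
    exact_mod_cast (Nat.choose_succ_succ l m).symm
  have h2 : ((l:ℝ)+1) * l.choose m = ((l+1).choose (m+1) : ℝ) * ((m:ℝ)+1) := by
    exact_mod_cast Nat.add_one_mul_choose_eq l m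
  have h3 : ((l+1).choose (m+1) : ℝ) ≠ 0 := by
    exact_mod_cast (Nat.choose_pos h).ne'
  have h4 : (1 + a * ((l:ℝ)+1)) * (l.choose m) + l.choose (m+1)
      = (1 + a*((m:ℝ)+1)) * (l+1).choose (m+1) := by linear_combination h1 + a * h2
  rw [h4]
  field_simp

lemma coeff_P (l : ℕ) (a : ℝ) (n : ℕ) :
    ((Polynomial.X + 1) ^ l * (Polynomial.C (1 + a * (l+1)) * Polynomial.X + 1) : ℝ[X]).coeff n
      = (1 + a * (l+1)) * (((X + 1 : ℝ[X]) ^ l * X).coeff n) + l.choose n := by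
  rw [mul_add, mul_one, Polynomial.coeff_add, coeff_X_add_one_pow]
  congr 1
  rw [show (X + 1 : ℝ[X]) ^ l * (Polynomial.C (1 + a * (l+1)) * Polynomial.X)
      = Polynomial.C (1 + a * (l+1)) * ((X + 1 : ℝ[X]) ^ l * X) by ring, coeff_C_mul]

/-- For every real polynomial `Q` of degree `k ≥ 1` and every real `a`, one has
`Q + a x Q' = ((x+1)^{k-1} ((1+ak) x + 1)) * Q`, where `*` denotes the Schur–Szegő
product of degree-`k` polynomials. -/
theorem stmt_11 (k : ℕ) (hk : 1 ≤ k) (Q : Polynomial ℝ) (hQ : Q.natDegree = k) (a : ℝ) :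
    Q + Polynomial.C a * (Polynomial.X * Polynomial.derivative Q) =
      schurSzego k
        ((Polynomial.X + 1) ^ (k - 1) * (Polynomial.C (1 + a * k) * Polynomial.X + 1)) Q := by
  obtain ⟨l, rfl⟩ : ∃ l, k = l + 1 := ⟨k - 1, (Nat.succ_pred_eq_of_pos hk).symm⟩
  have hcast : ((l+1 : ℕ) : ℝ) = (l : ℝ) + 1 := by push_cast; ring
  ext n
  rw [schurSzego, Polynomial.finset_sum_coeff]
  simp only [Polynomial.coeff_C_mul, Polynomial.coeff_X_pow, mul_ite, mul_one, mul_zero,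
    Finset.sum_ite_eq (Finset.range (l+1+1)) n]
  by_cases hn : n ∈ Finset.range (l+1+1)
  · rw [if_pos hn]
    have hn' : n ≤ l + 1 := Nat.lt_succ_iff.mp (Finset.mem_range.mp hn)
    rw [Nat.add_sub_cancel, hcast, coeff_P]
    cases n with
    | zero =>
      simp [Polynomial.mul_coeff_zero, coeff_X_add_one_pow]
    | succ m =>
      rw [Polynomial.coeff_add, Polynomial.coeff_C_mul, Polynomial.coeff_X_mul,
        Polynomial.coeff_derivative, Polynomial.coeff_mul_X, coeff_X_add_one_pow]
      rw [key_arith l m hn' a (Q.coeff (m+1))]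
      ring
  · rw [if_neg hn]
    have hn' : l + 1 < n := Nat.lt_of_succ_le (Nat.not_lt.mp (fun h => hn (Finset.mem_range.mpr h)))
    have h0 : Q.coeff n = 0 := Q.coeff_eq_zero_of_natDegree_lt (by omega)
    have h1 : (Polynomial.derivative Q).coeff (n-1) = 0 := by
      apply Polynomial.coeff_eq_zero_of_natDegree_lt
      calc (Polynomial.derivative Q).natDegree ≤ Q.natDegree - 1 := Polynomial.natDegree_derivative_le Q
        _ < n - 1 := by omega
    cases n with
    | zero => omega
    | succ m =>
      rw [Polynomial.coeff_add, Polynomial.coeff_C_mul, Polynomial.coeff_X_mul, h0]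
      simp only [Nat.add_sub_cancel] at h1; rw [h1]; ring

end
end
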